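/- arXiv:2209.11882 — 6 statements merged into one kernel-verified Lean document; each statement's English description precedes it below -/
import Mathlib

section
/- For all binary words u and v, the LCS multiplicity satisfies m_LCS(u,v) ≤ m_SCS(u,v). -/
/-- Length of a longest common subsequence of two binary words. -/
noncomputable def LCSlen (u v : List Bool) : ℕ :=
  sSup {m : ℕ | ∃ w : List Bool, w.Sublist u ∧ w.Sublist v ∧ w.length = m}

/-- Length of a shortest common supersequence of two binary words. -/
noncomputable def SCSlen (u v : List Bool) : ℕ :=
  sInf {m : ℕ | ∃ w : List Bool, u.Sublist w ∧ v.Sublist w ∧ w.length = m}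

/-- Deletion distance between two words of equal length `n`: `n - LCS`. -/
noncomputable def delDist (u v : List Bool) : ℕ := u.length - LCSlen u v

/-- Number of distinct longest common subsequences. -/
noncomputable def mLCS (u v : List Bool) : ℕ :=
  Set.ncard {w : List Bool | w.Sublist u ∧ w.Sublist v ∧ w.length = LCSlen u v}

/-- Number of distinct shortest common supersequences. -/
noncomputable def mSCS (u v : List Bool) : ℕ :=
  Set.ncard {w : List Bool | u.Sublist w ∧ v.Sublist w ∧ w.length = SCSlen u v}

/-! ### Auxiliary lemmas -/

section Aux

lemma lcs_set_nonempty (u v : List Bool) :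
    {m : ℕ | ∃ w : List Bool, w.Sublist u ∧ w.Sublist v ∧ w.length = m}.Nonempty :=
  ⟨0, [], List.nil_sublist u, List.nil_sublist v, rfl⟩

lemma lcs_set_bdd (u v : List Bool) :
    BddAbove {m : ℕ | ∃ w : List Bool, w.Sublist u ∧ w.Sublist v ∧ w.length = m} := by
  refine ⟨u.length, ?_⟩
  rintro m ⟨w, hu, -, rfl⟩
  exact hu.length_le

lemma length_le_lcs {u v w : List Bool} (h1 : w.Sublist u) (h2 : w.Sublist v) :
    w.length ≤ LCSlen u v :=
  le_csSup (lcs_set_bdd u v) ⟨w, h1, h2, rfl⟩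

lemma exists_lcs (u v : List Bool) :
    ∃ w : List Bool, w.Sublist u ∧ w.Sublist v ∧ w.length = LCSlen u v :=
  Nat.sSup_mem (lcs_set_nonempty u v) (lcs_set_bdd u v)

lemma scs_le_length {u v w : List Bool} (h1 : u.Sublist w) (h2 : v.Sublist w) :
    SCSlen u v ≤ w.length :=
  Nat.sInf_le ⟨w, h1, h2, rfl⟩

lemma exists_scs (u v : List Bool) :
    ∃ w : List Bool, u.Sublist w ∧ v.Sublist w ∧ w.length = SCSlen u v := by
  have h : {m : ℕ | ∃ w : List Bool, u.Sublist w ∧ v.Sublist w ∧ w.length = m}.Nonempty :=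
    ⟨(u ++ v).length, u ++ v, u.sublist_append_left v, u.sublist_append_right v, rfl⟩
  exact Nat.sInf_mem h

lemma LCSlen_comm (u v : List Bool) : LCSlen u v = LCSlen v u := by
  unfold LCSlen
  congr 1
  ext m
  constructor <;> rintro ⟨w, h1, h2, rfl⟩ <;> exact ⟨w, h2, h1, rfl⟩

lemma SCSlen_comm (u v : List Bool) : SCSlen u v = SCSlen v u := by
  unfold SCSlen
  congr 1
  ext m
  constructor <;> rintro ⟨w, h1, h2, rfl⟩ <;> exact ⟨w, h2, h1, rfl⟩

lemma mLCS_comm (u v : List Bool) : mLCS u v = mLCS v u := by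
  unfold mLCS
  congr 1
  ext w
  simp only [Set.mem_setOf_eq, LCSlen_comm]
  tauto

lemma mSCS_comm (u v : List Bool) : mSCS u v = mSCS v u := by
  unfold mSCS
  congr 1
  ext w
  simp only [Set.mem_setOf_eq, SCSlen_comm]
  tauto

lemma lcs_nil (v : List Bool) : LCSlen [] v = 0 := by
  refine le_antisymm (csSup_le (lcs_set_nonempty _ _) ?_) (Nat.zero_le _)
  rintro m ⟨w, hw, -, rfl⟩
  simp [List.sublist_nil.mp hw]

lemma scs_nil (v : List Bool) : SCSlen [] v = v.length := by
  refine le_antisymm (scs_le_length (List.nil_sublist v) (List.Sublist.refl v)) ?_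
  refine le_csInf ⟨v.length, v, List.nil_sublist v, List.Sublist.refl v, rfl⟩ ?_
  rintro m ⟨w, -, hv, rfl⟩
  exact hv.length_le

lemma mLCS_nil (v : List Bool) : mLCS [] v = 1 := by
  unfold mLCS
  have h : {w : List Bool | w.Sublist [] ∧ w.Sublist v ∧ w.length = LCSlen [] v}
      = {([] : List Bool)} := by
    ext w
    simp only [Set.mem_setOf_eq, Set.mem_singleton_iff, List.sublist_nil, lcs_nil]
    constructor
    · rintro ⟨rfl, -⟩; rfl
    · rintro rfl; exact ⟨rfl, List.nil_sublist v, rfl⟩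
  rw [h, Set.ncard_singleton]

lemma mSCS_nil (v : List Bool) : mSCS [] v = 1 := by
  unfold mSCS
  have h : {w : List Bool | List.Sublist [] w ∧ v.Sublist w ∧ w.length = SCSlen [] v}
      = {v} := by
    ext w
    simp only [Set.mem_setOf_eq, Set.mem_singleton_iff, scs_nil]
    constructor
    · rintro ⟨-, hv, hlen⟩
      exact (hv.eq_of_length hlen.symm).symm
    · rintro rfl
      exact ⟨List.nil_sublist w, List.Sublist.refl w, rfl⟩
  rw [h, Set.ncard_singleton]

/-! ### Equal heads -/

lemma lcs_cons_cons (b : Bool) (u v : List Bool) :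
    LCSlen (b :: u) (b :: v) = LCSlen u v + 1 := by
  apply le_antisymm
  · apply csSup_le (lcs_set_nonempty _ _)
    rintro m ⟨w, hu, hv, rfl⟩
    have h : ∃ r : List Bool, r.Sublist u ∧ r.Sublist v ∧ w.length ≤ r.length + 1 := by
      rcases List.sublist_cons_iff.mp hu with hu' | ⟨r, rfl, hru⟩
      · rcases List.sublist_cons_iff.mp hv with hv' | ⟨r, rfl, hrv⟩
        · exact ⟨w, hu', hv', Nat.le_succ _⟩
        · exact ⟨r, List.sublist_of_cons_sublist hu', hrv, le_refl _⟩
      · rcases List.sublist_cons_iff.mp hv with hv' | ⟨r', heq, hrv⟩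
        · exact ⟨r, hru, List.sublist_of_cons_sublist hv', le_refl _⟩
        · obtain ⟨rfl⟩ : r = r' := by injection heq
          exact ⟨r, hru, hrv, le_refl _⟩
    obtain ⟨r, h1, h2, h3⟩ := h
    have := length_le_lcs h1 h2
    omega
  · obtain ⟨w, h1, h2, h3⟩ := exists_lcs u v
    have h := length_le_lcs (h1.cons₂ b) (h2.cons₂ b)
    simp only [List.length_cons] at h
    omega

lemma scs_cons_cons (b : Bool) (u v : List Bool) :
    SCSlen (b :: u) (b :: v) = SCSlen u v + 1 := by
  apply le_antisymm
  · obtain ⟨s, h1, h2, h3⟩ := exists_scs u v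
    have h := scs_le_length (h1.cons₂ b) (h2.cons₂ b)
    simp only [List.length_cons] at h
    omega
  · obtain ⟨s, h1, h2, h3⟩ := exists_scs (b :: u) (b :: v)
    cases s with
    | nil => exact absurd (List.sublist_nil.mp h1) (by simp)
    | cons d s' =>
      have hu' : u.Sublist s' := by
        rcases List.sublist_cons_iff.mp h1 with h | ⟨r, heq, hr⟩
        · exact List.sublist_of_cons_sublist h
        · obtain ⟨rfl, rfl⟩ : b = d ∧ u = r := by constructor <;> injection heq
          exact hr
      have hv' : v.Sublist s' := by
        rcases List.sublist_cons_iff.mp h2 with h | ⟨r, heq, hr⟩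
        · exact List.sublist_of_cons_sublist h
        · obtain ⟨rfl, rfl⟩ : b = d ∧ v = r := by constructor <;> injection heq
          exact hr
      have := scs_le_length hu' hv'
      simp only [List.length_cons] at h3
      omega

lemma mLCS_cons_cons (b : Bool) (u v : List Bool) :
    mLCS (b :: u) (b :: v) = mLCS u v := by
  unfold mLCS
  have hset : {w : List Bool | w.Sublist (b :: u) ∧ w.Sublist (b :: v) ∧
        w.length = LCSlen (b :: u) (b :: v)}
      = (fun w => b :: w) ''
        {w : List Bool | w.Sublist u ∧ w.Sublist v ∧ w.length = LCSlen u v} := by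
    ext w
    simp only [Set.mem_image, Set.mem_setOf_eq]
    constructor
    · rintro ⟨hu, hv, hlen⟩
      rw [lcs_cons_cons] at hlen
      have h : ∃ r, w = b :: r ∧ r.Sublist u ∧ r.Sublist v := by
        rcases List.sublist_cons_iff.mp hu with hu' | ⟨r, rfl, hru⟩
        · rcases List.sublist_cons_iff.mp hv with hv' | ⟨r, rfl, hrv⟩
          · exfalso; have := length_le_lcs hu' hv'; omega
          · exact ⟨r, rfl, List.sublist_of_cons_sublist hu', hrv⟩
        · refine ⟨r, rfl, hru, ?_⟩
          rcases List.sublist_cons_iff.mp hv with hv' | ⟨r', heq, hrv⟩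
          · exact List.sublist_of_cons_sublist hv'
          · obtain ⟨rfl⟩ : r = r' := by injection heq
            exact hrv
      obtain ⟨r, rfl, h1, h2⟩ := h
      simp only [List.length_cons] at hlen
      exact ⟨r, ⟨h1, h2, by omega⟩, rfl⟩
    · rintro ⟨r, ⟨h1, h2, h3⟩, rfl⟩
      exact ⟨h1.cons₂ b, h2.cons₂ b, by simp [lcs_cons_cons, h3]⟩
  rw [hset, Set.ncard_image_of_injective _ List.cons_injective]

lemma mSCS_cons_cons (b : Bool) (u v : List Bool) :
    mSCS (b :: u) (b :: v) = mSCS u v := by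
  unfold mSCS
  have hset : {s : List Bool | (b :: u).Sublist s ∧ (b :: v).Sublist s ∧
        s.length = SCSlen (b :: u) (b :: v)}
      = (fun s => b :: s) ''
        {s : List Bool | u.Sublist s ∧ v.Sublist s ∧ s.length = SCSlen u v} := by
    ext s
    simp only [Set.mem_image, Set.mem_setOf_eq]
    constructor
    · rintro ⟨hu, hv, hlen⟩
      rw [scs_cons_cons] at hlen
      cases s with
      | nil => simp at hlen
      | cons d s' =>
        simp only [List.length_cons] at hlen
        by_cases hd : d = b
        · subst hd
          exact ⟨s', ⟨List.cons_sublist_cons.mp hu, List.cons_sublist_cons.mp hv,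
            by omega⟩, rfl⟩
        · exfalso
          have hu' : (b :: u).Sublist s' := by
            rcases List.sublist_cons_iff.mp hu with h | ⟨r, heq, hr⟩
            · exact h
            · injection heq with h1 _; exact absurd h1.symm hd
          have hv' : (b :: v).Sublist s' := by
            rcases List.sublist_cons_iff.mp hv with h | ⟨r, heq, hr⟩
            · exact h
            · injection heq with h1 _; exact absurd h1.symm hd
          have := scs_le_length hu' hv'
          rw [scs_cons_cons] at this
          omega
    · rintro ⟨s', ⟨h1, h2, h3⟩, rfl⟩
      exact ⟨h1.cons₂ b, h2.cons₂ b, by simp [scs_cons_cons, h3]⟩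
  rw [hset, Set.ncard_image_of_injective _ List.cons_injective]

/-! ### Different heads: lengths -/

lemma lcs_neq {b c : Bool} (hbc : b ≠ c) (u v : List Bool) :
    LCSlen (b :: u) (c :: v) = max (LCSlen (b :: u) v) (LCSlen u (c :: v)) := by
  apply le_antisymm
  · apply csSup_le (lcs_set_nonempty _ _)
    rintro m ⟨w, hu, hv, rfl⟩
    rcases List.sublist_cons_iff.mp hv with hv' | ⟨r, rfl, hrv⟩
    · exact le_trans (length_le_lcs hu hv') (le_max_left _ _)
    · have hu' : (c :: r).Sublist u := by
        rcases List.sublist_cons_iff.mp hu with h | ⟨r', heq, hr⟩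
        · exact h
        · injection heq with h1 _; exact absurd h1.symm hbc
      exact le_trans (length_le_lcs hu' hv) (le_max_right _ _)
  · apply max_le
    · obtain ⟨w, h1, h2, h3⟩ := exists_lcs (b :: u) v
      rw [← h3]
      exact length_le_lcs h1 (h2.cons c)
    · obtain ⟨w, h1, h2, h3⟩ := exists_lcs u (c :: v)
      rw [← h3]
      exact length_le_lcs (h1.cons b) h2

lemma scs_neq {b c : Bool} (hbc : b ≠ c) (u v : List Bool) :
    SCSlen (b :: u) (c :: v) = min (SCSlen (b :: u) v) (SCSlen u (c :: v)) + 1 := by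
  apply le_antisymm
  · have hle1 : SCSlen (b :: u) (c :: v) ≤ SCSlen (b :: u) v + 1 := by
      obtain ⟨s, h1, h2, h3⟩ := exists_scs (b :: u) v
      have h := scs_le_length (h1.cons c) (h2.cons₂ c)
      simp only [List.length_cons] at h
      omega
    have hle2 : SCSlen (b :: u) (c :: v) ≤ SCSlen u (c :: v) + 1 := by
      obtain ⟨s, h1, h2, h3⟩ := exists_scs u (c :: v)
      have h := scs_le_length (h1.cons₂ b) (h2.cons b)
      simp only [List.length_cons] at h
      omega
    rcases le_total (SCSlen (b :: u) v) (SCSlen u (c :: v)) with h | h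
    · rw [min_eq_left h]; exact hle1
    · rw [min_eq_right h]; exact hle2
  · obtain ⟨s, h1, h2, h3⟩ := exists_scs (b :: u) (c :: v)
    cases s with
    | nil => exact absurd (List.sublist_nil.mp h1) (by simp)
    | cons d s' =>
      simp only [List.length_cons] at h3
      have hd : d = b ∨ d = c := by cases d <;> cases b <;> cases c <;> simp_all
      rcases hd with rfl | rfl
      · have hu' : u.Sublist s' := by
          rcases List.sublist_cons_iff.mp h1 with h | ⟨r, heq, hr⟩
          · exact List.sublist_of_cons_sublist h
          · obtain ⟨rfl⟩ : u = r := by injection heq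
            exact hr
        have hv' : (c :: v).Sublist s' := by
          rcases List.sublist_cons_iff.mp h2 with h | ⟨r, heq, hr⟩
          · exact h
          · injection heq with h1 _; exact absurd h1.symm hbc
        have := scs_le_length hu' hv'
        have hmin : min (SCSlen (d :: u) v) (SCSlen u (c :: v)) ≤ SCSlen u (c :: v) :=
          min_le_right _ _
        omega
      · have hu' : (b :: u).Sublist s' := by
          rcases List.sublist_cons_iff.mp h1 with h | ⟨r, heq, hr⟩
          · exact h
          · injection heq with h1 _; exact absurd h1 hbc
        have hv' : v.Sublist s' := by
          rcases List.sublist_cons_iff.mp h2 with h | ⟨r, heq, hr⟩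
          · exact List.sublist_of_cons_sublist h
          · obtain ⟨rfl⟩ : v = r := by injection heq
            exact hr
        have := scs_le_length hu' hv'
        have hmin : min (SCSlen (b :: u) v) (SCSlen u (d :: v)) ≤ SCSlen (b :: u) v :=
          min_le_left _ _
        omega

/-! ### The identity LCS + SCS = |u| + |v| -/

lemma lcs_add_scs (u v : List Bool) :
    LCSlen u v + SCSlen u v = u.length + v.length := by
  induction u generalizing v with
  | nil => simp [lcs_nil, scs_nil]
  | cons b u ihu =>
    induction v with
    | nil =>
      rw [LCSlen_comm, SCSlen_comm, lcs_nil, scs_nil]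
      simp
    | cons c v ihv =>
      by_cases hbc : b = c
      · subst hbc
        rw [lcs_cons_cons, scs_cons_cons]
        have := ihu v
        simp only [List.length_cons]
        omega
      · rw [lcs_neq hbc, scs_neq hbc]
        have h1 := ihv
        have h2 := ihu (c :: v)
        simp only [List.length_cons] at h1 h2 ⊢
        rcases le_total (LCSlen (b :: u) v) (LCSlen u (c :: v)) with h | h
        · rw [max_eq_right h, min_eq_right (by omega)]
          omega
        · rw [max_eq_left h, min_eq_left (by omega)]
          omega

/-! ### Slice lemmas -/

lemma slice_lcs (x y : List Bool) {L : ℕ} (h : LCSlen x y = L) :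
    {w : List Bool | w.Sublist x ∧ w.Sublist y ∧ w.length = L}.ncard = mLCS x y := by
  unfold mLCS
  rw [h]

lemma slice_lcs_empty (x y : List Bool) {L : ℕ} (h : LCSlen x y < L) :
    {w : List Bool | w.Sublist x ∧ w.Sublist y ∧ w.length = L} = ∅ := by
  ext w
  simp only [Set.mem_setOf_eq, Set.mem_empty_iff_false, iff_false]
  rintro ⟨h1, h2, h3⟩
  have := length_le_lcs h1 h2
  omega

lemma slice_scs (x y : List Bool) {M : ℕ} (h : SCSlen x y = M) :
    {s : List Bool | x.Sublist s ∧ y.Sublist s ∧ s.length = M}.ncard = mSCS x y := by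
  unfold mSCS
  rw [h]

lemma slice_scs_empty (x y : List Bool) {M : ℕ} (h : M < SCSlen x y) :
    {s : List Bool | x.Sublist s ∧ y.Sublist s ∧ s.length = M} = ∅ := by
  ext s
  simp only [Set.mem_setOf_eq, Set.mem_empty_iff_false, iff_false]
  rintro ⟨h1, h2, h3⟩
  have := scs_le_length h1 h2
  omega

lemma slice_finite (P Q : List Bool → Prop) (L : ℕ) :
    {w : List Bool | P w ∧ Q w ∧ w.length = L}.Finite :=
  (List.finite_length_eq Bool L).subset (by rintro w ⟨-, -, h⟩; exact h)

/-! ### Key different-heads step -/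

lemma key_step {b c : Bool} (hbc : b ≠ c) (u v : List Bool)
    (ih1 : mLCS (b :: u) v ≤ mSCS (b :: u) v)
    (ih2 : mLCS u (c :: v) ≤ mSCS u (c :: v)) :
    mLCS (b :: u) (c :: v) ≤ mSCS (b :: u) (c :: v) := by
  have hLmax := lcs_neq hbc u v
  have hScs := scs_neq hbc u v
  have idty1 := lcs_add_scs (b :: u) v
  have idty2 := lcs_add_scs u (c :: v)
  simp only [List.length_cons] at idty1 idty2
  set L := LCSlen (b :: u) (c :: v) with hLdef
  set M' := min (SCSlen (b :: u) v) (SCSlen u (c :: v)) with hM'def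
  -- The four slices
  have hAfin : {w : List Bool | w.Sublist (b :: u) ∧ w.Sublist v ∧ w.length = L}.Finite :=
    slice_finite _ _ _
  have hBfin : {w : List Bool | w.Sublist u ∧ w.Sublist (c :: v) ∧ w.length = L}.Finite :=
    slice_finite _ _ _
  have hCfin : {s : List Bool | u.Sublist s ∧ (c :: v).Sublist s ∧ s.length = M'}.Finite :=
    slice_finite _ _ _
  have hDfin : {s : List Bool | (b :: u).Sublist s ∧ v.Sublist s ∧ s.length = M'}.Finite :=
    slice_finite _ _ _
  -- LCS bound: mLCS ≤ |A| + |B|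
  have hsub : {w : List Bool | w.Sublist (b :: u) ∧ w.Sublist (c :: v) ∧ w.length = L}
      ⊆ {w : List Bool | w.Sublist (b :: u) ∧ w.Sublist v ∧ w.length = L}
        ∪ {w : List Bool | w.Sublist u ∧ w.Sublist (c :: v) ∧ w.length = L} := by
    rintro w ⟨hu, hv, hlen⟩
    rcases List.sublist_cons_iff.mp hv with hv' | ⟨r, rfl, hrv⟩
    · exact Or.inl ⟨hu, hv', hlen⟩
    · refine Or.inr ⟨?_, hv, hlen⟩
      rcases List.sublist_cons_iff.mp hu with h | ⟨r', heq, hr⟩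
      · exact h
      · injection heq with h1 _; exact absurd h1.symm hbc
  have hlcs : mLCS (b :: u) (c :: v)
      ≤ {w : List Bool | w.Sublist (b :: u) ∧ w.Sublist v ∧ w.length = L}.ncard
        + {w : List Bool | w.Sublist u ∧ w.Sublist (c :: v) ∧ w.length = L}.ncard := by
    unfold mLCS
    rw [← hLdef]
    exact le_trans (Set.ncard_le_ncard hsub (hAfin.union hBfin)) (Set.ncard_union_le _ _)
  -- SCS decomposition: mSCS = |C| + |D|
  have hSCSset : {s : List Bool | (b :: u).Sublist s ∧ (c :: v).Sublist s ∧
        s.length = SCSlen (b :: u) (c :: v)}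
      = (fun s => b :: s) '' {s : List Bool | u.Sublist s ∧ (c :: v).Sublist s ∧ s.length = M'}
        ∪ (fun s => c :: s) '' {s : List Bool | (b :: u).Sublist s ∧ v.Sublist s ∧ s.length = M'} := by
    ext s
    simp only [Set.mem_union, Set.mem_image, Set.mem_setOf_eq]
    constructor
    · rintro ⟨hu, hv, hlen⟩
      rw [hScs] at hlen
      cases s with
      | nil => simp at hlen
      | cons d s' =>
        simp only [List.length_cons] at hlen
        have hd : d = b ∨ d = c := by cases d <;> cases b <;> cases c <;> simp_all
        rcases hd with rfl | rfl
        · refine Or.inl ⟨s', ⟨?_, ?_, by omega⟩, rfl⟩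
          · exact List.cons_sublist_cons.mp hu
          · rcases List.sublist_cons_iff.mp hv with h | ⟨r, heq, hr⟩
            · exact h
            · injection heq with h1 _; exact absurd h1.symm hbc
        · refine Or.inr ⟨s', ⟨?_, ?_, by omega⟩, rfl⟩
          · rcases List.sublist_cons_iff.mp hu with h | ⟨r, heq, hr⟩
            · exact h
            · injection heq with h1 _; exact absurd h1 hbc
          · exact List.cons_sublist_cons.mp hv
    · rintro (⟨s', ⟨h1, h2, h3⟩, rfl⟩ | ⟨s', ⟨h1, h2, h3⟩, rfl⟩)
      · exact ⟨h1.cons₂ b, h2.cons b, by simp [hScs, h3]⟩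
      · exact ⟨h1.cons c, h2.cons₂ c, by simp [hScs, h3]⟩
  have hdisj : Disjoint
      ((fun s => b :: s) '' {s : List Bool | u.Sublist s ∧ (c :: v).Sublist s ∧ s.length = M'})
      ((fun s => c :: s) '' {s : List Bool | (b :: u).Sublist s ∧ v.Sublist s ∧ s.length = M'}) := by
    rw [Set.disjoint_left]
    rintro x ⟨s1, -, rfl⟩ ⟨s2, -, heq⟩
    injection heq with h1 _; exact absurd h1 hbc.symm
  have hscs : mSCS (b :: u) (c :: v)
      = {s : List Bool | u.Sublist s ∧ (c :: v).Sublist s ∧ s.length = M'}.ncard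
        + {s : List Bool | (b :: u).Sublist s ∧ v.Sublist s ∧ s.length = M'}.ncard := by
    unfold mSCS
    rw [hSCSset, Set.ncard_union_eq hdisj (hCfin.image _) (hDfin.image _),
      Set.ncard_image_of_injective _ List.cons_injective,
      Set.ncard_image_of_injective _ List.cons_injective]
  -- |A| ≤ |D| (pair (b::u, v))
  have hL1 : LCSlen (b :: u) v ≤ L := by rw [hLmax]; exact le_max_left _ _
  have hL2 : LCSlen u (c :: v) ≤ L := by rw [hLmax]; exact le_max_right _ _
  have hAD : {w : List Bool | w.Sublist (b :: u) ∧ w.Sublist v ∧ w.length = L}.ncard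
      ≤ {s : List Bool | (b :: u).Sublist s ∧ v.Sublist s ∧ s.length = M'}.ncard := by
    rcases lt_or_eq_of_le hL1 with h | h
    · rw [slice_lcs_empty _ _ h]
      simp
    · have hM : SCSlen (b :: u) v = M' := by
        rw [hM'def]
        exact (min_eq_left (by omega)).symm
      rw [slice_lcs _ _ h, slice_scs _ _ hM]
      exact ih1
  have hBC : {w : List Bool | w.Sublist u ∧ w.Sublist (c :: v) ∧ w.length = L}.ncard
      ≤ {s : List Bool | u.Sublist s ∧ (c :: v).Sublist s ∧ s.length = M'}.ncard := by
    rcases lt_or_eq_of_le hL2 with h | h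
    · rw [slice_lcs_empty _ _ h]
      simp
    · have hM : SCSlen u (c :: v) = M' := by
        rw [hM'def]
        exact (min_eq_right (by omega)).symm
      rw [slice_lcs _ _ h, slice_scs _ _ hM]
      exact ih2
  omega

end Aux

theorem stmt1 (u v : List Bool) : mLCS u v ≤ mSCS u v := by
  induction u generalizing v with
  | nil => rw [mLCS_nil, mSCS_nil]
  | cons b u ihu =>
    induction v with
    | nil =>
      rw [mLCS_comm, mSCS_comm, mLCS_nil, mSCS_nil]
    | cons c v ihv =>
      by_cases hbc : b = c
      · subst hbc
        rw [mLCS_cons_cons, mSCS_cons_cons]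
        exact ihu v
      · exact key_step hbc u v ihv (ihu (c :: v))
end

section
/- Let n, a, b be natural numbers with n ≥ a + b. If u and v are binary words of lengths n − a and n − b respectively with SCS(u,v) = n (equivalently, LCS(u,v) = n − a − b), then m_LCS(u,v) ≤ m_SCS(u,v) ≤ binomial(a+b, a). -/
namespace StmtAux

open List Set

/-- The set of longest common subsequences. -/
def LCSset (u v : List Bool) : Set (List Bool) :=
  {w | w.Sublist u ∧ w.Sublist v ∧ w.length = LCSlen u v}

/-- The set of shortest common supersequences. -/
def SCSset (u v : List Bool) : Set (List Bool) :=
  {w | u.Sublist w ∧ v.Sublist w ∧ w.length = SCSlen u v}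

lemma mLCS_eq (u v : List Bool) : mLCS u v = (LCSset u v).ncard := rfl
lemma mSCS_eq (u v : List Bool) : mSCS u v = (SCSset u v).ncard := rfl

lemma lcs_bdd (u v : List Bool) :
    BddAbove {m : ℕ | ∃ w : List Bool, w.Sublist u ∧ w.Sublist v ∧ w.length = m} := by
  refine ⟨u.length, fun m hm => ?_⟩
  obtain ⟨w, h1, _, h3⟩ := hm
  exact h3 ▸ h1.length_le

lemma lcs_spec (u v : List Bool) :
    ∃ w : List Bool, w.Sublist u ∧ w.Sublist v ∧ w.length = LCSlen u v := by
  have h := Nat.sSup_mem (s := {m : ℕ | ∃ w : List Bool, w.Sublist u ∧ w.Sublist v ∧ w.length = m})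
    ⟨0, ⟨[], nil_sublist _, nil_sublist _, rfl⟩⟩ (lcs_bdd u v)
  obtain ⟨w, h1, h2, h3⟩ := h
  exact ⟨w, h1, h2, h3⟩

lemma le_lcs {u v w : List Bool} (h1 : w.Sublist u) (h2 : w.Sublist v) :
    w.length ≤ LCSlen u v :=
  le_csSup (lcs_bdd u v) ⟨w, h1, h2, rfl⟩

lemma scs_spec (u v : List Bool) :
    ∃ w : List Bool, u.Sublist w ∧ v.Sublist w ∧ w.length = SCSlen u v := by
  have h := Nat.sInf_mem (s := {m : ℕ | ∃ w : List Bool, u.Sublist w ∧ v.Sublist w ∧ w.length = m})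
    ⟨(u ++ v).length, ⟨u ++ v, sublist_append_left u v, sublist_append_right u v, rfl⟩⟩
  obtain ⟨w, h1, h2, h3⟩ := h
  exact ⟨w, h1, h2, h3⟩

lemma scs_le {u v w : List Bool} (h1 : u.Sublist w) (h2 : v.Sublist w) :
    SCSlen u v ≤ w.length :=
  Nat.sInf_le ⟨w, h1, h2, rfl⟩

lemma length_le_scs_left (u v : List Bool) : u.length ≤ SCSlen u v := by
  obtain ⟨w, h1, _, h3⟩ := scs_spec u v
  exact h3 ▸ h1.length_le

lemma length_le_scs_right (u v : List Bool) : v.length ≤ SCSlen u v := by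
  obtain ⟨w, _, h2, h3⟩ := scs_spec u v
  exact h3 ▸ h2.length_le

/-! ### nil cases -/

lemma lcs_nil_left (v : List Bool) : LCSlen [] v = 0 := by
  obtain ⟨w, h1, _, h3⟩ := lcs_spec [] v
  rw [← h3, List.sublist_nil.mp h1]; rfl

lemma lcs_nil_right (u : List Bool) : LCSlen u [] = 0 := by
  obtain ⟨w, _, h2, h3⟩ := lcs_spec u []
  rw [← h3, List.sublist_nil.mp h2]; rfl

lemma scs_nil_left (v : List Bool) : SCSlen [] v = v.length :=
  le_antisymm (scs_le (nil_sublist v) (Sublist.refl v)) (length_le_scs_right [] v)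

lemma scs_nil_right (u : List Bool) : SCSlen u [] = u.length :=
  le_antisymm (scs_le (Sublist.refl u) (nil_sublist u)) (length_le_scs_left u [])

lemma LCSset_nil_left (v : List Bool) : LCSset [] v = {[]} := by
  ext w
  simp only [LCSset, Set.mem_setOf_eq, Set.mem_singleton_iff, lcs_nil_left, List.sublist_nil]
  constructor
  · rintro ⟨h, -, -⟩; exact h
  · rintro rfl; exact ⟨rfl, nil_sublist _, rfl⟩

lemma LCSset_nil_right (u : List Bool) : LCSset u [] = {[]} := by
  ext w
  simp only [LCSset, Set.mem_setOf_eq, Set.mem_singleton_iff, lcs_nil_right, List.sublist_nil]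
  constructor
  · rintro ⟨-, h, -⟩; exact h
  · rintro rfl; exact ⟨nil_sublist _, rfl, rfl⟩

lemma SCSset_nil_left (v : List Bool) : SCSset [] v = {v} := by
  ext w
  simp only [SCSset, Set.mem_setOf_eq, Set.mem_singleton_iff, scs_nil_left]
  constructor
  · rintro ⟨-, h2, h3⟩; exact (h2.eq_of_length h3.symm).symm
  · rintro rfl; exact ⟨nil_sublist _, Sublist.refl _, rfl⟩

lemma SCSset_nil_right (u : List Bool) : SCSset u [] = {u} := by
  ext w
  simp only [SCSset, Set.mem_setOf_eq, Set.mem_singleton_iff, scs_nil_right]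
  constructor
  · rintro ⟨h1, -, h3⟩; exact (h1.eq_of_length h3.symm).symm
  · rintro rfl; exact ⟨Sublist.refl _, nil_sublist _, rfl⟩

/-! ### sublist helpers -/

/-- tails of sublists of cons. -/
lemma sub_tail_tail {c e : Bool} {u w : List Bool} (h : (c :: u).Sublist (e :: w)) :
    u.Sublist w := by
  cases h with
  | cons _ h => exact (sublist_cons_self c u).trans h
  | cons_cons _ h => exact h

lemma ne_head_sub {d c : Bool} {w u : List Bool} (h : (d :: w).Sublist (c :: u)) (hne : d ≠ c) :
    (d :: w).Sublist u := by
  cases h with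
  | cons _ h => exact h
  | cons_cons _ h => exact absurd rfl hne

lemma tail_sub {d c : Bool} {w u : List Bool} (h : (d :: w).Sublist (c :: u)) : w.Sublist u :=
  sub_tail_tail h

/-! ### recursion: equal heads -/

lemma lcs_cons_cons (c : Bool) (u v : List Bool) :
    LCSlen (c :: u) (c :: v) = LCSlen u v + 1 := by
  apply Nat.le_antisymm
  · obtain ⟨w, h1, h2, h3⟩ := lcs_spec (c :: u) (c :: v)
    match w with
    | [] =>
      have h0 : LCSlen (c :: u) (c :: v) = 0 := by simpa using h3.symm
      omega
    | d :: w' =>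
      have hu := tail_sub h1
      have hv := tail_sub h2
      have := le_lcs hu hv
      rw [← h3]; simp only [List.length_cons]; omega
  · obtain ⟨w, h1, h2, h3⟩ := lcs_spec u v
    have := le_lcs (h1.cons₂ c) (h2.cons₂ c)
    simpa [h3] using this

lemma LCSset_cons_cons (c : Bool) (u v : List Bool) :
    LCSset (c :: u) (c :: v) = (c :: ·) '' LCSset u v := by
  ext w
  constructor
  · rintro ⟨h1, h2, h3⟩
    rw [lcs_cons_cons] at h3
    match w with
    | [] => simp at h3
    | d :: w' =>
      have hu := tail_sub h1
      have hv := tail_sub h2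
      have hlen : w'.length = LCSlen u v := by
        simp only [List.length_cons] at h3; omega
      have hdc : d = c := by
        by_contra hne
        have h1' := ne_head_sub h1 hne
        have h2' := ne_head_sub h2 hne
        have := le_lcs h1' h2'
        simp only [List.length_cons] at this hlen
        omega
      subst hdc
      exact ⟨w', ⟨hu, hv, hlen⟩, rfl⟩
  · rintro ⟨w', ⟨h1, h2, h3⟩, rfl⟩
    exact ⟨h1.cons₂ c, h2.cons₂ c, by simp [lcs_cons_cons, h3]⟩

lemma scs_cons_cons (c : Bool) (u v : List Bool) :
    SCSlen (c :: u) (c :: v) = SCSlen u v + 1 := by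
  apply Nat.le_antisymm
  · obtain ⟨w, h1, h2, h3⟩ := scs_spec u v
    have := scs_le (h1.cons₂ c) (h2.cons₂ c)
    simpa [h3] using this
  · obtain ⟨w, h1, h2, h3⟩ := scs_spec (c :: u) (c :: v)
    match w with
    | [] => simp at h1
    | e :: w' =>
      have hu := sub_tail_tail h1
      have hv := sub_tail_tail h2
      have := scs_le hu hv
      rw [← h3]; simp only [List.length_cons]; omega

lemma SCSset_cons_cons (c : Bool) (u v : List Bool) :
    SCSset (c :: u) (c :: v) = (c :: ·) '' SCSset u v := by
  ext w
  constructor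
  · rintro ⟨h1, h2, h3⟩
    rw [scs_cons_cons] at h3
    match w with
    | [] => simp at h1
    | e :: w' =>
      have hlen : w'.length = SCSlen u v := by
        simp only [List.length_cons] at h3; omega
      have hec : e = c := by
        by_contra hne
        have h1' := ne_head_sub h1 (Ne.symm hne)
        have h2' := ne_head_sub h2 (Ne.symm hne)
        have h := scs_le h1' h2'
        rw [scs_cons_cons, hlen] at h
        omega
      subst hec
      exact ⟨w', ⟨sub_tail_tail h1, sub_tail_tail h2, hlen⟩, rfl⟩
  · rintro ⟨w', ⟨h1, h2, h3⟩, rfl⟩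
    exact ⟨h1.cons₂ c, h2.cons₂ c, by simp [scs_cons_cons, h3]⟩

/-! ### monotonicity helpers -/

lemma lcs_le_cons_left (c : Bool) (u v : List Bool) : LCSlen u v ≤ LCSlen (c :: u) v := by
  obtain ⟨w, h1, h2, h3⟩ := lcs_spec u v
  exact h3 ▸ le_lcs (h1.trans (sublist_cons_self c u)) h2

lemma lcs_le_cons_right (d : Bool) (u v : List Bool) : LCSlen u v ≤ LCSlen u (d :: v) := by
  obtain ⟨w, h1, h2, h3⟩ := lcs_spec u v
  exact h3 ▸ le_lcs h1 (h2.trans (sublist_cons_self d v))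

lemma scs_cons_left_le (c : Bool) (u v : List Bool) : SCSlen (c :: u) v ≤ SCSlen u v + 1 := by
  obtain ⟨w, h1, h2, h3⟩ := scs_spec u v
  have := scs_le (h1.cons₂ c) (h2.trans (sublist_cons_self c w))
  simpa [h3] using this

lemma scs_cons_right_le (d : Bool) (u v : List Bool) : SCSlen u (d :: v) ≤ SCSlen u v + 1 := by
  obtain ⟨w, h1, h2, h3⟩ := scs_spec u v
  have := scs_le (h1.trans (sublist_cons_self d w)) (h2.cons₂ d)
  simpa [h3] using this

/-! ### branch lemmas: different heads -/

lemma lcs_branch {c d : Bool} {u' v' : List Bool} (hcd : c ≠ d) {w : List Bool}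
    (hw : w ∈ LCSset (c :: u') (d :: v')) :
    (LCSlen u' (d :: v') = LCSlen (c :: u') (d :: v') ∧ w ∈ LCSset u' (d :: v')) ∨
    (LCSlen (c :: u') v' = LCSlen (c :: u') (d :: v') ∧ w ∈ LCSset (c :: u') v') := by
  obtain ⟨h1, h2, h3⟩ := hw
  match w with
  | [] =>
    left
    have h0 : LCSlen (c :: u') (d :: v') = 0 := h3 ▸ rfl
    have hle := lcs_le_cons_left c u' (d :: v')
    have heq : LCSlen u' (d :: v') = LCSlen (c :: u') (d :: v') := by omega
    exact ⟨heq, nil_sublist _, nil_sublist _, by omega⟩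
  | e :: w' =>
    by_cases he : e = c
    · right
      subst he
      have h2' : (e :: w').Sublist v' := ne_head_sub h2 hcd
      have hle := le_lcs h1 h2'
      have hge := lcs_le_cons_right d (e :: u') v'
      have heq : LCSlen (e :: u') v' = LCSlen (e :: u') (d :: v') := by omega
      exact ⟨heq, h1, h2', by omega⟩
    · left
      have h1' : (e :: w').Sublist u' := ne_head_sub h1 he
      have hle := le_lcs h1' h2
      have hge := lcs_le_cons_left c u' (d :: v')
      have heq : LCSlen u' (d :: v') = LCSlen (c :: u') (d :: v') := by omega
      exact ⟨heq, h1', h2, by omega⟩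

lemma scs_branch_mem {c d : Bool} {u' v' : List Bool} (hcd : c ≠ d) {w : List Bool}
    (hw : w ∈ SCSset (c :: u') (d :: v')) :
    (SCSlen u' (d :: v') + 1 = SCSlen (c :: u') (d :: v') ∧
      w ∈ (c :: ·) '' SCSset u' (d :: v')) ∨
    (SCSlen (c :: u') v' + 1 = SCSlen (c :: u') (d :: v') ∧
      w ∈ (d :: ·) '' SCSset (c :: u') v') := by
  obtain ⟨h1, h2, h3⟩ := hw
  match w with
  | [] => simp at h1
  | e :: w' =>
    by_cases hec : e = c
    · left
      subst hec
      have hu : u'.Sublist w' := sub_tail_tail h1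
      have hv : (d :: v').Sublist w' := ne_head_sub h2 (Ne.symm hcd)
      have hle := scs_le hu hv
      have hge := scs_cons_left_le e u' (d :: v')
      simp only [List.length_cons] at h3
      have heq : SCSlen u' (d :: v') + 1 = SCSlen (e :: u') (d :: v') := by omega
      exact ⟨heq, w', ⟨hu, hv, by omega⟩, rfl⟩
    · by_cases hed : e = d
      · right
        subst hed
        have hv : v'.Sublist w' := sub_tail_tail h2
        have hu : (c :: u').Sublist w' := ne_head_sub h1 (fun h => hec h.symm)
        have hle := scs_le hu hv
        have hge := scs_cons_right_le e (c :: u') v'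
        simp only [List.length_cons] at h3
        have heq : SCSlen (c :: u') v' + 1 = SCSlen (c :: u') (e :: v') := by omega
        exact ⟨heq, w', ⟨hu, hv, by omega⟩, rfl⟩
      · exfalso
        have hu : (c :: u').Sublist w' := ne_head_sub h1 (fun h => hec h.symm)
        have hv : (d :: v').Sublist w' := ne_head_sub h2 (fun h => hed h.symm)
        have := scs_le hu hv
        simp only [List.length_cons] at h3
        omega

lemma scs_branch_sup_left {c d : Bool} {u' v' : List Bool}
    (h : SCSlen u' (d :: v') + 1 = SCSlen (c :: u') (d :: v')) :
    (c :: ·) '' SCSset u' (d :: v') ⊆ SCSset (c :: u') (d :: v') := by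
  rintro _ ⟨w, ⟨h1, h2, h3⟩, rfl⟩
  exact ⟨h1.cons₂ c, h2.trans (sublist_cons_self c w), by simp [h3, ← h]⟩

lemma scs_branch_sup_right {c d : Bool} {u' v' : List Bool}
    (h : SCSlen (c :: u') v' + 1 = SCSlen (c :: u') (d :: v')) :
    (d :: ·) '' SCSset (c :: u') v' ⊆ SCSset (c :: u') (d :: v') := by
  rintro _ ⟨w, ⟨h1, h2, h3⟩, rfl⟩
  exact ⟨h1.trans (sublist_cons_self d w), h2.cons₂ d, by simp [h3, ← h]⟩

/-! ### finiteness -/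

lemma LCSset_finite (u v : List Bool) : (LCSset u v).Finite :=
  (List.finite_length_eq Bool (LCSlen u v)).subset fun _ hw => hw.2.2

lemma SCSset_finite (u v : List Bool) : (SCSset u v).Finite :=
  (List.finite_length_eq Bool (SCSlen u v)).subset fun _ hw => hw.2.2

/-! ### the identity SCS + LCS = |u| + |v| -/

lemma scs_add_lcs_aux : ∀ N : ℕ, ∀ u v : List Bool, u.length + v.length ≤ N →
    SCSlen u v + LCSlen u v = u.length + v.length := by
  intro N
  induction N with
  | zero =>
    intro u v h
    have hu : u = [] := List.length_eq_zero_iff.mp (by omega)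
    have hv : v = [] := List.length_eq_zero_iff.mp (by omega)
    subst hu; subst hv
    simp [scs_nil_left, lcs_nil_left]
  | succ N ih =>
    intro u v h
    match u, v with
    | [], v => simp [scs_nil_left, lcs_nil_left]
    | c :: u', [] => simp [scs_nil_right, lcs_nil_right]
    | c :: u', d :: v' =>
      by_cases hcd : c = d
      · subst hcd
        rw [scs_cons_cons, lcs_cons_cons]
        have := ih u' v' (by simp only [List.length_cons] at h; omega)
        simp only [List.length_cons]
        omega
      · have i0 := ih u' (d :: v') (by simp only [List.length_cons] at h ⊢; omega)
        have i1 := ih (c :: u') v' (by simp only [List.length_cons] at h ⊢; omega)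
        -- SCS disjunction
        obtain ⟨w, hw1, hw2, hw3⟩ := scs_spec (c :: u') (d :: v')
        rcases scs_branch_mem hcd ⟨hw1, hw2, hw3⟩ with ⟨hS, -⟩ | ⟨hS, -⟩ <;>
        · obtain ⟨t, ht1, ht2, ht3⟩ := lcs_spec (c :: u') (d :: v')
          rcases lcs_branch hcd ⟨ht1, ht2, ht3⟩ with ⟨hL, -⟩ | ⟨hL, -⟩ <;>
          · have m0 := scs_cons_left_le c u' (d :: v')
            have m1 := scs_cons_right_le d (c :: u') v'
            have m2 := lcs_le_cons_left c u' (d :: v')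
            have m3 := lcs_le_cons_right d (c :: u') v'
            simp only [List.length_cons] at i0 i1 ⊢
            omega

lemma scs_add_lcs (u v : List Bool) :
    SCSlen u v + LCSlen u v = u.length + v.length :=
  scs_add_lcs_aux (u.length + v.length) u v le_rfl

/-! ### counting helpers -/

lemma cons_injective (c : Bool) : Function.Injective (c :: · : List Bool → List Bool) :=
  fun _ _ h => by injection h

lemma pascal' {a b : ℕ} (ha : 1 ≤ a) (hb : 1 ≤ b) :
    (a + b).choose a = (a + (b - 1)).choose a + ((a - 1) + b).choose (a - 1) := by
  obtain ⟨a', rfl⟩ : ∃ a', a = a' + 1 := ⟨a - 1, by omega⟩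
  obtain ⟨b', rfl⟩ : ∃ b', b = b' + 1 := ⟨b - 1, by omega⟩
  simp only [Nat.add_sub_cancel]
  have e : a' + 1 + (b' + 1) = (a' + (b' + 1)) + 1 := by omega
  have e2 : a' + 1 + b' = a' + (b' + 1) := by omega
  rw [e, Nat.choose_succ_succ', e2, Nat.add_comm ((a' + (b' + 1)).choose a')]

/-! ### the main induction -/

lemma main_aux : ∀ N : ℕ, ∀ u v : List Bool, ∀ a b : ℕ,
    u.length + v.length ≤ N →
    SCSlen u v = u.length + a → SCSlen u v = v.length + b →
    mLCS u v ≤ mSCS u v ∧ mSCS u v ≤ (a + b).choose a := by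
  intro N
  induction N with
  | zero =>
    intro u v a b h ha hb
    have hu : u = [] := List.length_eq_zero_iff.mp (by omega)
    have hv : v = [] := List.length_eq_zero_iff.mp (by omega)
    subst hu; subst hv
    rw [scs_nil_left] at ha hb
    simp only [List.length_nil] at ha hb
    have ha' : a = 0 := by omega
    have hb' : b = 0 := by omega
    subst ha'; subst hb'
    rw [mLCS_eq, mSCS_eq, LCSset_nil_left, SCSset_nil_left]
    simp
  | succ N ih =>
    intro u v a b h ha hb
    match u, v with
    | [], v =>
      rw [scs_nil_left] at ha hb
      simp only [List.length_nil] at ha hb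
      have ha' : a = v.length := by omega
      have hb' : b = 0 := by omega
      subst ha'; subst hb'
      rw [mLCS_eq, mSCS_eq, LCSset_nil_left, SCSset_nil_left]
      simp [Nat.choose_self]
    | c :: u', [] =>
      rw [scs_nil_right] at ha hb
      simp only [List.length_nil] at ha hb
      have ha' : a = 0 := by omega
      subst ha'
      rw [mLCS_eq, mSCS_eq, LCSset_nil_right, SCSset_nil_right]
      simp
    | c :: u', d :: v' =>
      by_cases hcd : c = d
      · subst hcd
        have e1 : mLCS (c :: u') (c :: v') = mLCS u' v' := by
          rw [mLCS_eq, mLCS_eq, LCSset_cons_cons,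
            Set.ncard_image_of_injective _ (cons_injective c)]
        have e2 : mSCS (c :: u') (c :: v') = mSCS u' v' := by
          rw [mSCS_eq, mSCS_eq, SCSset_cons_cons,
            Set.ncard_image_of_injective _ (cons_injective c)]
        rw [e1, e2]
        have hS := scs_cons_cons c u' v'
        simp only [List.length_cons] at h ha hb
        exact ih u' v' a b (by omega) (by omega) (by omega)
      · -- different heads
        have id0 := scs_add_lcs u' (d :: v')
        have id1 := scs_add_lcs (c :: u') v'
        have idb := scs_add_lcs (c :: u') (d :: v')
        simp only [List.length_cons] at id0 id1 idb h ha hb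
        obtain ⟨w₀, hw1, hw2, hw3⟩ := scs_spec (c :: u') (d :: v')
        have hach : SCSlen u' (d :: v') + 1 = SCSlen (c :: u') (d :: v') ∨
            SCSlen (c :: u') v' + 1 = SCSlen (c :: u') (d :: v') := by
          rcases scs_branch_mem hcd ⟨hw1, hw2, hw3⟩ with ⟨h', -⟩ | ⟨h', -⟩
          · exact Or.inl h'
          · exact Or.inr h'
        have hvb := length_le_scs_right u' (d :: v')
        have hua := length_le_scs_left (c :: u') v'
        simp only [List.length_cons] at hvb hua
        by_cases h0 : SCSlen u' (d :: v') + 1 = SCSlen (c :: u') (d :: v') <;>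
          by_cases h1 : SCSlen (c :: u') v' + 1 = SCSlen (c :: u') (d :: v')
        · -- both branches achieve
          have hb1 : 1 ≤ b := by omega
          have ha1 : 1 ≤ a := by omega
          obtain ⟨ihm0, ihc0⟩ := ih u' (d :: v') a (b - 1) (by simp only [List.length_cons]; omega)
            (by omega) (by simp only [List.length_cons]; omega)
          obtain ⟨ihm1, ihc1⟩ := ih (c :: u') v' (a - 1) b (by simp only [List.length_cons]; omega)
            (by simp only [List.length_cons]; omega) (by omega)
          have hseteq : SCSset (c :: u') (d :: v') =
              (c :: ·) '' SCSset u' (d :: v') ∪ (d :: ·) '' SCSset (c :: u') v' := by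
            apply Set.Subset.antisymm
            · intro w hw
              rcases scs_branch_mem hcd hw with ⟨-, hm⟩ | ⟨-, hm⟩
              · exact Or.inl hm
              · exact Or.inr hm
            · rintro w (hw | hw)
              · exact scs_branch_sup_left h0 hw
              · exact scs_branch_sup_right h1 hw
          have hdis : Disjoint ((c :: ·) '' SCSset u' (d :: v'))
              ((d :: ·) '' SCSset (c :: u') v') := by
            rw [Set.disjoint_left]
            rintro w ⟨x, -, rfl⟩ ⟨y, -, hy⟩
            exact hcd (by injection hy with h' _; exact h'.symm)
          have msum : mSCS (c :: u') (d :: v') = mSCS u' (d :: v') + mSCS (c :: u') v' := by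
            rw [mSCS_eq, hseteq,
              Set.ncard_union_eq hdis ((SCSset_finite _ _).image _) ((SCSset_finite _ _).image _),
              Set.ncard_image_of_injective _ (cons_injective c),
              Set.ncard_image_of_injective _ (cons_injective d)]
            rfl
          constructor
          · have hsub : LCSset (c :: u') (d :: v') ⊆
                LCSset u' (d :: v') ∪ LCSset (c :: u') v' := by
              intro w hw
              rcases lcs_branch hcd hw with ⟨-, hm⟩ | ⟨-, hm⟩
              · exact Or.inl hm
              · exact Or.inr hm
            calc mLCS (c :: u') (d :: v')
                ≤ (LCSset u' (d :: v') ∪ LCSset (c :: u') v').ncard := by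
                  rw [mLCS_eq]
                  exact Set.ncard_le_ncard hsub ((LCSset_finite _ _).union (LCSset_finite _ _))
              _ ≤ (LCSset u' (d :: v')).ncard + (LCSset (c :: u') v').ncard :=
                  Set.ncard_union_le _ _
              _ = mLCS u' (d :: v') + mLCS (c :: u') v' := rfl
              _ ≤ mSCS u' (d :: v') + mSCS (c :: u') v' := Nat.add_le_add ihm0 ihm1
              _ = mSCS (c :: u') (d :: v') := msum.symm
          · rw [msum, pascal' ha1 hb1]
            exact Nat.add_le_add ihc0 ihc1
        · -- only left branch achieves
          have hb1 : 1 ≤ b := by omega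
          obtain ⟨ihm0, ihc0⟩ := ih u' (d :: v') a (b - 1) (by simp only [List.length_cons]; omega)
            (by omega) (by simp only [List.length_cons]; omega)
          have hseteq : SCSset (c :: u') (d :: v') = (c :: ·) '' SCSset u' (d :: v') := by
            apply Set.Subset.antisymm
            · intro w hw
              rcases scs_branch_mem hcd hw with ⟨-, hm⟩ | ⟨h', -⟩
              · exact hm
              · exact absurd h' h1
            · exact scs_branch_sup_left h0
          have msum : mSCS (c :: u') (d :: v') = mSCS u' (d :: v') := by
            rw [mSCS_eq, hseteq, Set.ncard_image_of_injective _ (cons_injective c)]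
            rfl
          constructor
          · have hsub : LCSset (c :: u') (d :: v') ⊆ LCSset u' (d :: v') := by
              intro w hw
              rcases lcs_branch hcd hw with ⟨-, hm⟩ | ⟨h', -⟩
              · exact hm
              · exact absurd h' (by omega)
            calc mLCS (c :: u') (d :: v')
                ≤ (LCSset u' (d :: v')).ncard :=
                  Set.ncard_le_ncard hsub (LCSset_finite _ _)
              _ = mLCS u' (d :: v') := rfl
              _ ≤ mSCS u' (d :: v') := ihm0
              _ = mSCS (c :: u') (d :: v') := msum.symm
          · rw [msum]
            exact le_trans ihc0 (Nat.choose_le_choose a (by omega))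
        · -- only right branch achieves
          have ha1 : 1 ≤ a := by omega
          obtain ⟨ihm1, ihc1⟩ := ih (c :: u') v' (a - 1) b (by simp only [List.length_cons]; omega)
            (by simp only [List.length_cons]; omega) (by omega)
          have hseteq : SCSset (c :: u') (d :: v') = (d :: ·) '' SCSset (c :: u') v' := by
            apply Set.Subset.antisymm
            · intro w hw
              rcases scs_branch_mem hcd hw with ⟨h', -⟩ | ⟨-, hm⟩
              · exact absurd h' h0
              · exact hm
            · exact scs_branch_sup_right h1
          have msum : mSCS (c :: u') (d :: v') = mSCS (c :: u') v' := by
            rw [mSCS_eq, hseteq, Set.ncard_image_of_injective _ (cons_injective d)]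
            rfl
          constructor
          · have hsub : LCSset (c :: u') (d :: v') ⊆ LCSset (c :: u') v' := by
              intro w hw
              rcases lcs_branch hcd hw with ⟨h', -⟩ | ⟨-, hm⟩
              · exact absurd h' (by omega)
              · exact hm
            calc mLCS (c :: u') (d :: v')
                ≤ (LCSset (c :: u') v').ncard :=
                  Set.ncard_le_ncard hsub (LCSset_finite _ _)
              _ = mLCS (c :: u') v' := rfl
              _ ≤ mSCS (c :: u') v' := ihm1
              _ = mSCS (c :: u') (d :: v') := msum.symm
          · rw [msum]
            have : (a - 1 + b).choose (a - 1) ≤ (a + b).choose a := by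
              have e : (a + b).choose a = ((a - 1 + b) + 1).choose ((a - 1) + 1) := by
                congr 1 <;> omega
              rw [e, Nat.choose_succ_succ']
              omega
            exact le_trans ihc1 this
        · exact absurd hach (by tauto)

end StmtAux

theorem stmt2 (n a b : ℕ) (hn : a + b ≤ n) (u v : List Bool)
    (hu : u.length = n - a) (hv : v.length = n - b) (hscs : SCSlen u v = n) :
    mLCS u v ≤ mSCS u v ∧ mSCS u v ≤ (a + b).choose a := by
  have ha' : SCSlen u v = u.length + a := by omega
  have hb' : SCSlen u v = v.length + b := by omega
  exact StmtAux.main_aux (u.length + v.length) u v a b le_rfl ha' hb'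
end

section
/- Let n, k, λ ≥ 1 be integers, and let u, v ∈ {0,1}^n be words that are both λ-nonrepeating. Suppose v = f_{I,T}(u) for some sequence (I,T) of insertions and deletions applied to u. If the number of indices j such that the position i_j is λ-isolated in I is at least 2k + 1, then the deletion distance satisfies d(u,v) > k. -/
/-- Type of an elementary operation: delete, insert a 0, or insert a 1. -/
inductive OpType : Type
  | del : OpType
  | ins0 : OpType
  | ins1 : OpType
  deriving DecidableEq

/-- Apply the elementary operation `(i, t)` to the word `u`: delete the `i`-th letter
(1-indexed) if `t = del`, or insert a `0` (resp. `1`) immediately after position `i`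
(0-indexed insertion slot) if `t = ins0` (resp. `ins1`). -/
def applyOp (u : List Bool) (op : ℕ × OpType) : List Bool :=
  match op.2 with
  | OpType.del  => u.eraseIdx (op.1 - 1)
  | OpType.ins0 => u.insertIdx op.1 false
  | OpType.ins1 => u.insertIdx op.1 true

/-- Apply a sequence of operations, listed in order of application
(i.e. the list is `[(i_l, t_l), (i_{l-1}, t_{l-1}), ..., (i_1, t_1)]`). -/
def applyOps (u : List Bool) (ops : List (ℕ × OpType)) : List Bool :=
  ops.foldl applyOp u

/-- Validity of a sequence of operations on a word of length `n`, listed in order of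
application: all positions are at most `n`, a deletion position is at least `1`,
positions are nonincreasing, and the position strictly decreases after a deletion. -/
def ValidOps (n : ℕ) (ops : List (ℕ × OpType)) : Prop :=
  (∀ p ∈ ops, p.1 ≤ n ∧ (p.2 = OpType.del → 1 ≤ p.1)) ∧
  List.Chain' (fun p q => q.1 ≤ p.1 ∧ (p.2 = OpType.del → q.1 < p.1)) ops

/-- The position at index `j` in the list of positions `is` is `lam`-isolated (with
respect to a word of length `n`): `lam < i_j < n - lam` and every other position in
the list differs from `i_j` by more than `2 * lam`. -/
def IsolatedAt (n lam : ℕ) (is : List ℕ) (j : Fin is.length) : Prop :=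
  lam < is.get j ∧ is.get j + lam < n ∧
    ∀ j' : Fin is.length, j' ≠ j → 2 * lam < ((is.get j' : ℤ) - (is.get j : ℤ)).natAbs

/-- A word `u` is `lam`-nonrepeating if no two contiguous subintervals of length `lam`
starting at distinct positions are equal. -/
def NonRepeating (lam : ℕ) (u : List Bool) : Prop :=
  ∀ i j : ℕ, i + lam ≤ u.length → j + lam ≤ u.length → i ≠ j →
    (u.drop i).take lam ≠ (u.drop j).take lam

abbrev Rop : ℕ × OpType → ℕ × OpType → Prop :=
  fun p q => q.1 ≤ p.1 ∧ (p.2 = OpType.del → q.1 < p.1)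

instance : IsTrans (ℕ × OpType) Rop :=
  ⟨fun _ _ _ hab hbc => ⟨hbc.1.trans hab.1, fun h => lt_of_le_of_lt hbc.1 (hab.2 h)⟩⟩

lemma applyOps_cons (w : List Bool) (p : ℕ × OpType) (ops : List (ℕ × OpType)) :
    applyOps w (p :: ops) = applyOps (applyOp w p) ops := rfl

lemma applyOps_append (w : List Bool) (A B : List (ℕ × OpType)) :
    applyOps w (A ++ B) = applyOps (applyOps w A) B := by
  simp [applyOps, List.foldl_append]

lemma insertIdx_eq_take_cons_drop (l : List Bool) (a : Bool) (n : ℕ) (h : n ≤ l.length) :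
    l.insertIdx n a = l.take n ++ a :: l.drop n := by
  induction l generalizing n with
  | nil => simp_all
  | cons x xs ih =>
    cases n with
    | zero => simp
    | succ m => simp [List.insertIdx_succ_cons, ih m (by simpa using h)]

lemma take_insertIdx' (w : List Bool) (b : Bool) (i m : ℕ) (h : m + 1 ≤ i) :
    (w.insertIdx i b).take m = w.take m := by
  rcases le_or_gt i w.length with hi | hi
  · rw [insertIdx_eq_take_cons_drop _ _ _ hi, List.take_append]
    have h2 : m - (List.take i w).length = 0 := by
      simp only [List.length_take]; omega
    have h3 : m ⊓ i = m := by omega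
    simp only [h2, List.take_zero, List.append_nil, List.take_take, h3]
  · rw [List.insertIdx_of_length_lt hi]

lemma take_applyOp (w : List Bool) (p : ℕ × OpType) (m : ℕ) (h : m + 1 ≤ p.1) :
    (applyOp w p).take m = w.take m := by
  obtain ⟨i, t⟩ := p
  simp only at h
  cases t
  · show (w.eraseIdx (i-1)).take m = w.take m
    rw [List.eraseIdx_eq_take_drop_succ, List.take_append, List.take_take]
    have h1 : m ⊓ (i-1) = m := by omega
    rcases le_or_gt m w.length with hm | hm
    · have h2 : m - (List.take (i-1) w).length = 0 := by
        simp only [List.length_take]; omega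
      simp only [h1, h2, List.take_zero, List.append_nil]
    · have h2 : w.drop (i-1+1) = [] := List.drop_eq_nil_of_le (by omega)
      have h3 : w.take m = w := List.take_of_length_le (by omega)
      have h4 : w.take (i-1) = w := List.take_of_length_le (by omega)
      simp [h1, h2, h3, h4]
  · exact take_insertIdx' w false i m h
  · exact take_insertIdx' w true i m h

lemma take_applyOps (ops : List (ℕ × OpType)) (w : List Bool) (m : ℕ)
    (h : ∀ p ∈ ops, m + 1 ≤ p.1) :
    (applyOps w ops).take m = w.take m := by
  induction ops generalizing w with
  | nil => rfl
  | cons p ops ih =>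
    rw [applyOps_cons, ih _ (fun q hq => h q (List.mem_cons_of_mem _ hq)),
      take_applyOp _ _ _ (h p (List.mem_cons_self))]

lemma length_applyOps_ge (ops : List (ℕ × OpType)) (w : List Bool) (m : ℕ)
    (h : ∀ p ∈ ops, m + 1 ≤ p.1) (hm : m ≤ w.length) :
    m ≤ (applyOps w ops).length := by
  have := congrArg List.length (take_applyOps ops w m h)
  simp only [List.length_take] at this
  omega

lemma applyOps_append_left (ops : List (ℕ × OpType)) (P Q : List Bool)
    (hpw : List.Pairwise Rop ops)
    (h : ∀ p ∈ ops, p.1 ≤ P.length ∧ (p.2 = OpType.del → 1 ≤ p.1)) :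
    applyOps (P ++ Q) ops = applyOps P ops ++ Q := by
  induction ops generalizing P with
  | nil => rfl
  | cons p ops ih =>
    obtain ⟨i, t⟩ := p
    obtain ⟨hi, hdel⟩ := h _ (List.mem_cons_self)
    simp only at hi hdel
    have hrel : ∀ q ∈ ops, Rop (i, t) q := fun q hq => List.rel_of_pairwise_cons hpw hq
    have hpw' := hpw.of_cons
    have htail : ∀ q ∈ ops, q.1 ≤ i := fun q hq => (hrel q hq).1
    cases t with
    | del =>
      have h1 : 1 ≤ i := hdel rfl
      have hlt : i - 1 < P.length := by omega
      rw [applyOps_cons]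
      show applyOps ((P ++ Q).eraseIdx (i-1)) ops = _
      rw [List.eraseIdx_append_of_lt_length hlt]
      rw [ih (P.eraseIdx (i-1)) hpw' ?_]
      · rfl
      · intro q hq
        refine ⟨?_, (h q (List.mem_cons_of_mem _ hq)).2⟩
        have := (hrel q hq).2 rfl
        rw [List.length_eraseIdx]
        simp only [hlt, if_true]
        omega
    | ins0 =>
      rw [applyOps_cons]
      show applyOps ((P ++ Q).insertIdx i false) ops = _
      rw [insertIdx_eq_take_cons_drop _ _ _ (by rw [List.length_append]; omega),
        List.take_append, List.drop_append]
      have e1 : i - P.length = 0 := by omega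
      simp only [e1, List.take_zero, List.drop_zero, List.append_nil]
      have : P.take i ++ false :: (P.drop i ++ Q) = (P.insertIdx i false) ++ Q := by
        rw [insertIdx_eq_take_cons_drop _ _ _ hi]; simp
      rw [this, ih _ hpw' ?_]
      · rfl
      · intro q hq
        refine ⟨?_, (h q (List.mem_cons_of_mem _ hq)).2⟩
        rw [List.length_insertIdx, if_pos hi]
        exact le_trans (htail q hq) (by omega)
    | ins1 =>
      rw [applyOps_cons]
      show applyOps ((P ++ Q).insertIdx i true) ops = _
      rw [insertIdx_eq_take_cons_drop _ _ _ (by rw [List.length_append]; omega),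
        List.take_append, List.drop_append]
      have e1 : i - P.length = 0 := by omega
      simp only [e1, List.take_zero, List.drop_zero, List.append_nil]
      have : P.take i ++ true :: (P.drop i ++ Q) = (P.insertIdx i true) ++ Q := by
        rw [insertIdx_eq_take_cons_drop _ _ _ hi]; simp
      rw [this, ih _ hpw' ?_]
      · rfl
      · intro q hq
        refine ⟨?_, (h q (List.mem_cons_of_mem _ hq)).2⟩
        rw [List.length_insertIdx, if_pos hi]
        exact le_trans (htail q hq) (by omega)

def Fmid (w : List Bool) (i lam : ℕ) (t : OpType) : List Bool :=
  applyOp ((w.drop (i - lam - 1)).take (2*lam+1)) (lam+1, t)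

lemma Fmid_del (w : List Bool) (i lam : ℕ) (h1 : lam < i) :
    Fmid w i lam OpType.del = (w.drop (i - lam - 1)).take lam ++ (w.drop i).take lam := by
  show ((w.drop (i - lam - 1)).take (2*lam+1)).eraseIdx (lam+1-1) = _
  have hl : lam + 1 - 1 = lam := by omega
  rw [hl, List.eraseIdx_eq_take_drop_succ, List.take_take, List.drop_take, List.drop_drop,
    (by omega : lam ⊓ (2*lam+1) = lam), (by omega : 2*lam+1 - (lam+1) = lam),
    (by omega : i - lam - 1 + (lam+1) = i)]

lemma Fmid_ins (w : List Bool) (i lam : ℕ) (t : OpType) (b : Bool)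
    (ht : t = OpType.ins0 ∧ b = false ∨ t = OpType.ins1 ∧ b = true)
    (h1 : lam < i) (h2 : i + lam ≤ w.length) :
    Fmid w i lam t = (w.drop (i - lam - 1)).take (lam+1) ++ b :: (w.drop i).take lam := by
  have hmidlen : lam + 1 ≤ ((w.drop (i - lam - 1)).take (2*lam+1)).length := by
    rw [List.length_take, List.length_drop]; omega
  have key : ((w.drop (i - lam - 1)).take (2*lam+1)).insertIdx (lam+1) b
      = (w.drop (i - lam - 1)).take (lam+1) ++ b :: (w.drop i).take lam := by
    rw [insertIdx_eq_take_cons_drop _ _ _ hmidlen, List.take_take, List.drop_take,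
      List.drop_drop, (by omega : (lam+1) ⊓ (2*lam+1) = lam+1),
      (by omega : 2*lam+1 - (lam+1) = lam), (by omega : i - lam - 1 + (lam+1) = i)]
  rcases ht with ⟨ht, hb⟩ | ⟨ht, hb⟩ <;> subst ht <;> subst hb <;>
    simpa [Fmid, applyOp] using key

lemma Fmid_del_length (w : List Bool) (i lam : ℕ) (h1 : lam < i) (h2 : i + lam ≤ w.length) :
    (Fmid w i lam OpType.del).length = 2*lam := by
  rw [Fmid_del w i lam h1, List.length_append, List.length_take, List.length_take, List.length_drop,
    List.length_drop]
  omega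

lemma Fmid_ins_length (w : List Bool) (i lam : ℕ) (t : OpType) (b : Bool)
    (ht : t = OpType.ins0 ∧ b = false ∨ t = OpType.ins1 ∧ b = true)
    (h1 : lam < i) (h2 : i + lam ≤ w.length) :
    (Fmid w i lam t).length = 2*lam + 2 := by
  rw [Fmid_ins w i lam t b ht h1 h2]
  simp only [List.length_append, List.length_take, List.length_cons, List.length_drop]
  omega

lemma Fmid_length_ge (w : List Bool) (i lam : ℕ) (t : OpType)
    (h1 : lam < i) (h2 : i + lam ≤ w.length) :
    2*lam ≤ (Fmid w i lam t).length ∧ (Fmid w i lam t).length ≤ 2*lam + 2 := by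
  cases t
  · rw [Fmid_del_length w i lam h1 h2]; omega
  · rw [Fmid_ins_length w i lam _ false (Or.inl ⟨rfl, rfl⟩) h1 h2]; omega
  · rw [Fmid_ins_length w i lam _ true (Or.inr ⟨rfl, rfl⟩) h1 h2]; omega

lemma stepDecomp (w : List Bool) (i lam : ℕ) (t : OpType) (h1 : lam < i)
    (h2 : i + lam ≤ w.length) :
    applyOp w (i, t) = w.take (i - lam - 1) ++ Fmid w i lam t ++ w.drop (i + lam) := by
  set a := i - lam - 1 with hadef
  have h_i_le : i ≤ w.length := by omega
  have hsplit1 : w.take (i-1) = w.take a ++ (w.drop a).take lam := by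
    rw [← List.take_add]; congr 1; omega
  have hsplit2 : w.take i = w.take a ++ (w.drop a).take (lam+1) := by
    rw [← List.take_add]; congr 1; omega
  have e5 : (w.drop i).take lam ++ w.drop (i+lam) = w.drop i := by
    have h' : w.drop (i+lam) = (w.drop i).drop lam := by rw [List.drop_drop]
    rw [h', List.take_append_drop]
  cases t
  case del =>
    show w.eraseIdx (i - 1) = _
    rw [Fmid_del w i lam h1, List.eraseIdx_eq_take_drop_succ]
    have hi1 : i - 1 + 1 = i := by omega
    rw [hi1, hsplit1, ← e5]
    simp [List.append_assoc, hadef]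
  case ins0 =>
    show w.insertIdx i false = _
    rw [Fmid_ins w i lam _ false (Or.inl ⟨rfl, rfl⟩) h1 h2,
      insertIdx_eq_take_cons_drop _ _ _ h_i_le, hsplit2, ← e5]
    simp [List.append_assoc, hadef]
  case ins1 =>
    show w.insertIdx i true = _
    rw [Fmid_ins w i lam _ true (Or.inr ⟨rfl, rfl⟩) h1 h2,
      insertIdx_eq_take_cons_drop _ _ _ h_i_le, hsplit2, ← e5]
    simp [List.append_assoc, hadef]

lemma decompMain (A B : List (ℕ × OpType)) (w : List Bool) (i lam : ℕ) (t : OpType)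
    (hA : ∀ p ∈ A, i + 2*lam + 1 ≤ p.1)
    (hB : ∀ p ∈ B, p.1 + lam + 1 ≤ i ∧ (p.2 = OpType.del → 1 ≤ p.1))
    (hBpw : List.Pairwise Rop B)
    (h1 : lam < i) (h2 : i + lam ≤ w.length) :
    ∃ tail, applyOps w (A ++ (i,t) :: B)
      = applyOps (w.take (i - lam - 1)) B ++ (Fmid w i lam t ++ tail) := by
  have htake : (applyOps w A).take (i+lam) = w.take (i+lam) :=
    take_applyOps A w (i+lam) (fun p hp => by have := hA p hp; omega)
  have hlen : i + lam ≤ (applyOps w A).length :=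
    length_applyOps_ge A w (i+lam) (fun p hp => by have := hA p hp; omega) h2
  rw [applyOps_append, applyOps_cons]
  rw [stepDecomp (applyOps w A) i lam t h1 hlen]
  have ht1 : (applyOps w A).take (i - lam - 1) = w.take (i - lam - 1) := by
    have hc := congrArg (List.take (i - lam - 1)) htake
    rw [List.take_take, List.take_take] at hc
    have hm : (i - lam - 1) ⊓ (i + lam) = i - lam - 1 := by omega
    rwa [hm] at hc
  have hmid : ((applyOps w A).drop (i-lam-1)).take (2*lam+1)
      = (w.drop (i-lam-1)).take (2*lam+1) := by
    have hd := congrArg (List.drop (i - lam - 1)) htake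
    rw [List.drop_take, List.drop_take] at hd
    have h' : i + lam - (i - lam - 1) = 2*lam+1 := by omega
    rwa [h'] at hd
  have hF : Fmid (applyOps w A) i lam t = Fmid w i lam t := by
    rw [Fmid, Fmid, hmid]
  rw [ht1, hF, List.append_assoc]
  rw [applyOps_append_left B (w.take (i - lam - 1)) _ hBpw ?_]
  · exact ⟨_, rfl⟩
  · intro p hp
    have hp' := hB p hp
    refine ⟨?_, hp'.2⟩
    rw [List.length_take]
    omega

lemma noGood_del (u : List Bool) (lam i P : ℕ) (hur : NonRepeating lam u)
    (hlam : 1 ≤ lam) (h1 : lam < i) (h2 : i + lam < u.length)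
    (hP : P + 2*lam ≤ u.length)
    (hfac : (u.drop P).take (2*lam)
      = (u.drop (i - lam - 1)).take lam ++ (u.drop i).take lam) : False := by
  set a := i - lam - 1 with hadef
  have hA : ((u.drop a).take lam).length = lam := by
    rw [List.length_take, List.length_drop]; omega
  have step1 : (u.drop P).take lam = (u.drop a).take lam := by
    have hc := congrArg (List.take lam) hfac
    rw [List.take_take, (by omega : lam ⊓ (2*lam) = lam),
      List.take_append, hA, Nat.sub_self, List.take_zero,
      List.append_nil, List.take_take, (by omega : lam ⊓ lam = lam)] at hc
    exact hc
  have hPa : P = a := by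
    by_contra hne
    exact hur P a (by omega) (by omega) hne step1
  have hdA : (List.take lam (List.drop a u)).drop lam = [] :=
    List.drop_eq_nil_of_le (by rw [hA])
  have step2 : (u.drop (P+lam)).take lam = (u.drop i).take lam := by
    have hc := congrArg (List.drop lam) hfac
    rw [List.drop_take, List.drop_drop, (by omega : 2*lam - lam = lam),
      List.drop_append, hA, Nat.sub_self, List.drop_zero,
      hdA, List.nil_append] at hc
    exact hc
  have : P + lam ≠ i := by omega
  exact hur (P+lam) i (by omega) (by omega) this step2

lemma noGood_ins (u : List Bool) (lam i P : ℕ) (b : Bool) (hur : NonRepeating lam u)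
    (hlam : 1 ≤ lam) (h1 : lam < i) (h2 : i + lam < u.length)
    (hP : P + (2*lam+2) ≤ u.length)
    (hfac : (u.drop P).take (2*lam+2)
      = (u.drop (i - lam - 1)).take (lam+1) ++ b :: (u.drop i).take lam) : False := by
  set a := i - lam - 1 with hadef
  have hA : ((u.drop a).take (lam+1)).length = lam+1 := by
    rw [List.length_take, List.length_drop]; omega
  have step1 : (u.drop P).take lam = (u.drop a).take lam := by
    have hc := congrArg (List.take lam) hfac
    rw [List.take_take, (by omega : lam ⊓ (2*lam+2) = lam),
      List.take_append, hA, (by omega : lam - (lam+1) = 0),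
      List.take_zero, List.append_nil, List.take_take,
      (by omega : lam ⊓ (lam+1) = lam)] at hc
    exact hc
  have hPa : P = a := by
    by_contra hne
    exact hur P a (by omega) (by omega) hne step1
  have hdA : ((u.drop a).take (lam+1)).drop (lam+2) = [] :=
    List.drop_eq_nil_of_le (by rw [hA]; omega)
  have step2 : (u.drop (P+lam+2)).take lam = (u.drop i).take lam := by
    have hc := congrArg (List.drop (lam+2)) hfac
    rw [List.drop_take, List.drop_drop, (by omega : 2*lam + 2 - (lam+2) = lam),
      List.drop_append, hA, hdA, List.nil_append,
      (by omega : lam + 2 - (lam + 1) = 1)] at hc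
    rw [(by rfl : (1:ℕ) = 0 + 1), List.drop_succ_cons, List.drop_zero] at hc
    rwa [(by omega : P + (lam+2) = P + lam + 2)] at hc
  have hne : P + lam + 2 ≠ i := by omega
  exact hur (P+lam+2) i (by omega) (by omega) hne step2

lemma noGood (u : List Bool) (lam i P : ℕ) (t : OpType) (hur : NonRepeating lam u)
    (hlam : 1 ≤ lam) (h1 : lam < i) (h2 : i + lam < u.length)
    (hP : P + (Fmid u i lam t).length ≤ u.length)
    (hfac : (u.drop P).take ((Fmid u i lam t).length) = Fmid u i lam t) : False := by
  have h2' : i + lam ≤ u.length := by omega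
  cases t
  case del =>
    rw [Fmid_del_length u i lam h1 h2'] at hP hfac
    rw [Fmid_del u i lam h1] at hfac
    exact noGood_del u lam i P hur hlam h1 h2 hP hfac
  case ins0 =>
    rw [Fmid_ins_length u i lam _ false (Or.inl ⟨rfl, rfl⟩) h1 h2'] at hP hfac
    rw [Fmid_ins u i lam _ false (Or.inl ⟨rfl, rfl⟩) h1 h2'] at hfac
    exact noGood_ins u lam i P false hur hlam h1 h2 hP hfac
  case ins1 =>
    rw [Fmid_ins_length u i lam _ true (Or.inr ⟨rfl, rfl⟩) h1 h2'] at hP hfac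
    rw [Fmid_ins u i lam _ true (Or.inr ⟨rfl, rfl⟩) h1 h2'] at hfac
    exact noGood_ins u lam i P true hur hlam h1 h2 hP hfac

lemma getElem_eq_get_of_val {l : List Bool} (x : Fin l.length) (n : ℕ) (h : n < l.length)
    (hx : (x : ℕ) = n) : l[n]'h = l.get x := by
  subst hx; rfl

lemma windowCases (u v w : List Bool)
    (f : Fin w.length ↪o Fin u.length) (g : Fin w.length ↪o Fin v.length)
    (hf : ∀ ix, w.get ix = u.get (f ix)) (hg : ∀ ix, w.get ix = v.get (g ix))
    (s : ℕ) (F : List Bool) (hlen : 1 ≤ F.length) (hsF : s + F.length ≤ v.length)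
    (hF : ∀ m (hm : m < F.length), v[s + m]'(by omega) = F[m]'hm) :
    (∃ q, s ≤ q ∧ q < s + F.length ∧ ∀ r : Fin w.length, (g r : ℕ) ≠ q) ∨
    (∃ (p : ℕ) (r0 r1 : Fin w.length), (g r0 : ℕ) = s ∧ (g r1 : ℕ) = s + F.length - 1 ∧
       (f r0 : ℕ) ≤ p ∧ p ≤ (f r1 : ℕ) ∧ ∀ r : Fin w.length, (f r : ℕ) ≠ p) ∨
    (∃ P, P + F.length ≤ u.length ∧ (u.drop P).take F.length = F) := by
  have hlen' : 0 < F.length := hlen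
  by_cases hV : ∀ m (hm : m < F.length), ∃ r : Fin w.length, (g r : ℕ) = s + m
  · choose r hr using hV
    have rmono : ∀ m1 m2 (h1 : m1 < F.length) (h2 : m2 < F.length), m1 < m2 →
        r m1 h1 < r m2 h2 := by
      intro m1 m2 h1 h2 hlt
      have hgv : (g (r m1 h1) : ℕ) < (g (r m2 h2) : ℕ) := by
        rw [hr, hr]; omega
      exact g.lt_iff_lt.mp (Fin.lt_def.mpr hgv)
    have rmono' : ∀ m1 m2 (h1 : m1 < F.length) (h2 : m2 < F.length), m1 ≤ m2 →
        (f (r m1 h1) : ℕ) ≤ (f (r m2 h2) : ℕ) := by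
      intro m1 m2 h1 h2 hle
      rcases Nat.lt_or_ge m1 m2 with h | h
      · exact le_of_lt (Fin.lt_def.mp (f.lt_iff_lt.mpr (rmono m1 m2 h1 h2 h)))
      · have : m1 = m2 := by omega
        subst this; rfl
    by_cases hU : ∀ p, (f (r 0 hlen') : ℕ) ≤ p →
        p ≤ (f (r (F.length - 1) (by omega)) : ℕ) → ∃ ix : Fin w.length, (f ix : ℕ) = p
    · right; right
      have step : ∀ m (hm : m + 1 < F.length),
          (f (r (m+1) hm) : ℕ) = (f (r m (by omega)) : ℕ) + 1 := by
        intro m hm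
        have hlt : (f (r m (by omega : m < F.length)) : ℕ) < (f (r (m+1) hm) : ℕ) :=
          Fin.lt_def.mp (f.lt_iff_lt.mpr (rmono m (m+1) (by omega) hm (by omega)))
        by_contra hne
        have hgap : (f (r m (by omega : m < F.length)) : ℕ) + 1 < (f (r (m+1) hm) : ℕ) := by
          omega
        obtain ⟨ix, hix⟩ := hU ((f (r m (by omega : m < F.length)) : ℕ) + 1)
          (by have := rmono' 0 m hlen' (by omega) (by omega); omega)
          (by have := rmono' (m+1) (F.length - 1) hm (by omega) (by omega); omega)
        have hi1 : r m (by omega : m < F.length) < ix := by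
          apply f.lt_iff_lt.mp
          rw [Fin.lt_def, hix]
          omega
        have hi2 : ix < r (m+1) hm := by
          apply f.lt_iff_lt.mp
          rw [Fin.lt_def, hix]
          omega
        have hg1 : (g (r m (by omega : m < F.length)) : ℕ) < (g ix : ℕ) :=
          Fin.lt_def.mp (g.lt_iff_lt.mpr hi1)
        have hg2 : (g ix : ℕ) < (g (r (m+1) hm) : ℕ) :=
          Fin.lt_def.mp (g.lt_iff_lt.mpr hi2)
        rw [hr] at hg1
        rw [hr] at hg2
        omega
      have main : ∀ m (hm : m < F.length),
          (f (r m hm) : ℕ) = (f (r 0 hlen') : ℕ) + m := by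
        intro m
        induction m with
        | zero => intro hm; omega
        | succ mm ih =>
          intro hm
          rw [step mm hm, ih (by omega)]
          omega
      set P := (f (r 0 hlen') : ℕ) with hP
      have hbound : P + F.length ≤ u.length := by
        have h1 := main (F.length - 1) (by omega)
        have h2 := (f (r (F.length - 1) (by omega)) ).isLt
        omega
      refine ⟨P, hbound, ?_⟩
      apply List.ext_getElem
      · rw [List.length_take, List.length_drop]; omega
      · intro m h1 h2
        rw [List.getElem_take, List.getElem_drop]
        have hm : m < F.length := h2
        have hfin : ((f (r m hm)) : ℕ) = P + m := by
          have := main m hm; omega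
        rw [getElem_eq_get_of_val (f (r m hm)) (P+m) (by omega) hfin, ← hf, hg,
          ← getElem_eq_get_of_val (g (r m hm)) (s+m) (by omega) (hr m hm)]
        exact hF m hm
    · push_neg at hU
      obtain ⟨p, hp1, hp2, hp3⟩ := hU
      right; left
      refine ⟨p, r 0 hlen', r (F.length - 1) (by omega), hr 0 hlen', ?_, hp1, hp2, hp3⟩
      rw [hr]
      omega
  · push_neg at hV
    obtain ⟨m, hm, hq⟩ := hV
    exact Or.inl ⟨s + m, by omega, by omega, hq⟩

lemma getElem_middle (X F T : List Bool) (m : ℕ) (hm : m < F.length)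
    (hb : X.length + m < (X ++ (F ++ T)).length) :
    (X ++ (F ++ T))[X.length + m]'hb = F[m]'hm := by
  rw [List.getElem_append_right (by omega)]
  have h' : X.length + m - X.length = m := by omega
  rw [List.getElem_append_left (by omega : X.length + m - X.length < F.length)]
  congr 1

lemma Fmid_take (w : List Bool) (X i lam : ℕ) (t : OpType) (h1 : lam < i)
    (hX : i + lam ≤ X) :
    Fmid (w.take X) i lam t = Fmid w i lam t := by
  have key : ((w.take X).drop (i - lam - 1)).take (2*lam+1)
      = (w.drop (i - lam - 1)).take (2*lam+1) := by
    rw [List.drop_take, List.take_take]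
    congr 1
    omega
  rw [Fmid, Fmid, key]

lemma isoDecomp (u : List Bool) (ops : List (ℕ × OpType)) (lam : ℕ)
    (hops1 : ∀ p ∈ ops, p.1 ≤ u.length ∧ (p.2 = OpType.del → 1 ≤ p.1))
    (hpw : List.Pairwise Rop ops)
    (j : ℕ) (hj : j < ops.length)
    (hiso : ∀ j' (hj' : j' < ops.length), j' ≠ j →
      2*lam < (((ops[j']'hj').1 : ℤ) - ((ops[j]'hj).1 : ℤ)).natAbs)
    (hlow : lam < (ops[j]'hj).1) (hhigh : (ops[j]'hj).1 + lam < u.length) :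
    ∃ tail, applyOps u ops
      = applyOps (u.take ((ops[j]'hj).1 - lam - 1)) (ops.drop (j+1))
        ++ (Fmid u (ops[j]'hj).1 lam (ops[j]'hj).2 ++ tail) := by
  set i := (ops[j]'hj).1 with hidef
  set t := (ops[j]'hj).2 with htdef
  have hsplit : ops = ops.take j ++ (i, t) :: ops.drop (j+1) := by
    conv_lhs => rw [← List.take_append_drop j ops]
    rw [List.drop_eq_getElem_cons hj]
  have hpair : ∀ j1 j2 (h1 : j1 < ops.length) (h2 : j2 < ops.length), j1 < j2 →
      (ops[j2]'h2).1 ≤ (ops[j1]'h1).1 :=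
    fun j1 j2 h1 h2 hlt => (List.pairwise_iff_getElem.mp hpw j1 j2 h1 h2 hlt).1
  have hA : ∀ p ∈ ops.take j, i + 2*lam + 1 ≤ p.1 := by
    intro p hp
    obtain ⟨m, hm, hpm⟩ := List.mem_iff_getElem.mp hp
    have hmlen : m < j := by
      have := hm; rw [List.length_take] at this; omega
    have hm' : m < ops.length := by omega
    have hval : (ops[m]'hm') = p := by rw [← hpm, List.getElem_take]
    have h1 := hpair m j hm' hj hmlen
    have h2 := hiso m hm' (by omega)
    rw [hval] at h1 h2
    omega
  have hB : ∀ p ∈ ops.drop (j+1), p.1 + lam + 1 ≤ i ∧ (p.2 = OpType.del → 1 ≤ p.1) := by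
    intro p hp
    obtain ⟨m, hm, hpm⟩ := List.mem_iff_getElem.mp hp
    have hm2 : j + 1 + m < ops.length := by
      have := hm; rw [List.length_drop] at this; omega
    have hval : (ops[j+1+m]'hm2) = p := by rw [← hpm, List.getElem_drop]
    have h1 := hpair j (j+1+m) hj hm2 (by omega)
    have h2 := hiso (j+1+m) hm2 (by omega)
    rw [hval] at h1 h2
    refine ⟨by omega, (hops1 p (List.mem_of_mem_drop hp)).2⟩
  have hBpw : List.Pairwise Rop (ops.drop (j+1)) :=
    List.Pairwise.sublist (List.drop_sublist _ _) hpw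
  obtain ⟨tail, htail⟩ := decompMain (ops.take j) (ops.drop (j+1)) u i lam t hA hB hBpw
    hlow (by omega)
  refine ⟨tail, ?_⟩
  rw [← htail]
  congr 1

instance : Inhabited OpType := ⟨OpType.del⟩

noncomputable def posN (ops : List (ℕ × OpType)) (j : ℕ) : ℕ := (ops[j]!).1

noncomputable def typN (ops : List (ℕ × OpType)) (j : ℕ) : OpType := (ops[j]!).2

noncomputable def sLen (u : List Bool) (ops : List (ℕ × OpType)) (lam j : ℕ) : ℕ :=
  (applyOps (u.take (posN ops j - lam - 1)) (ops.drop (j+1))).length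

noncomputable def FN (u : List Bool) (ops : List (ℕ × OpType)) (lam j : ℕ) : List Bool :=
  Fmid u (posN ops j) lam (typN ops j)

lemma posN_eq (ops : List (ℕ × OpType)) (j : ℕ) (hj : j < ops.length) :
    posN ops j = (ops[j]'hj).1 := by
  rw [posN, getElem!_pos ops j hj]

lemma typN_eq (ops : List (ℕ × OpType)) (j : ℕ) (hj : j < ops.length) :
    typN ops j = (ops[j]'hj).2 := by
  rw [typN, getElem!_pos ops j hj]

lemma ncard_unmatched (v : List Bool) (wlen : ℕ) (g : Fin wlen ↪o Fin v.length)
    (hvpos : 0 < v.length) :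
    {q : ℕ | q < v.length ∧ ∀ r : Fin wlen, (g r : ℕ) ≠ q}.ncard ≤ v.length - wlen := by
  classical
  have hrange : (Set.range (⇑g)).ncard = wlen := by
    rw [← Nat.card_coe_set_eq, Nat.card_range_of_injective g.injective,
      Nat.card_eq_fintype_card, Fintype.card_fin]
  have hcompl : (Set.range (⇑g))ᶜ.ncard = v.length - wlen := by
    have h := Set.ncard_add_ncard_compl (Set.range (⇑g))
    rw [hrange, Nat.card_eq_fintype_card, Fintype.card_fin] at h
    omega
  rw [← hcompl]
  apply Set.ncard_le_ncard_of_injOn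
    (fun q => if h : q < v.length then (⟨q, h⟩ : Fin v.length) else ⟨0, hvpos⟩)
  · rintro q ⟨hq1, hq2⟩
    simp only [hq1, dif_pos]
    rintro ⟨r, hr⟩
    exact hq2 r (by rw [hr])
  · rintro a ⟨ha1, -⟩ b ⟨hb1, -⟩ hab
    simp only [ha1, hb1, dif_pos, Fin.mk.injEq] at hab
    exact hab

lemma isoOrder (u : List Bool) (ops : List (ℕ × OpType)) (lam : ℕ)
    (hops1 : ∀ p ∈ ops, p.1 ≤ u.length ∧ (p.2 = OpType.del → 1 ≤ p.1))
    (hpw : List.Pairwise Rop ops)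
    (j1 j2 : ℕ) (hj1 : j1 < ops.length) (hj2 : j2 < ops.length) (hlt : j1 < j2)
    (hiso2 : ∀ j' (hj' : j' < ops.length), j' ≠ j2 →
      2*lam < (((ops[j']'hj').1 : ℤ) - ((ops[j2]'hj2).1 : ℤ)).natAbs)
    (hlow2 : lam < (ops[j2]'hj2).1) (hhigh2 : (ops[j2]'hj2).1 + lam < u.length) :
    sLen u ops lam j2 + (FN u ops lam j2).length ≤ sLen u ops lam j1 := by
  have hpair : ∀ a b (h1 : a < ops.length) (h2 : b < ops.length), a < b →
      (ops[b]'h2).1 ≤ (ops[a]'h1).1 :=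
    fun a b h1 h2 hab => (List.pairwise_iff_getElem.mp hpw a b h1 h2 hab).1
  set i1 := (ops[j1]'hj1).1 with hi1
  set i2 := (ops[j2]'hj2).1 with hi2
  set t2 := (ops[j2]'hj2).2 with ht2
  have hord : i2 + 2*lam + 1 ≤ i1 := by
    have h1 := hpair j1 j2 hj1 hj2 hlt
    have h2 := hiso2 j1 hj1 (by omega)
    omega
  have hsplit : ops.drop (j1+1)
      = (ops.drop (j1+1)).take (j2-j1-1) ++ (i2, t2) :: ops.drop (j2+1) := by
    conv_lhs => rw [← List.take_append_drop (j2-j1-1) (ops.drop (j1+1))]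
    rw [List.drop_drop, (by omega : j1 + 1 + (j2 - j1 - 1) = j2),
      List.drop_eq_getElem_cons hj2]
  have hA : ∀ p ∈ (ops.drop (j1+1)).take (j2-j1-1), i2 + 2*lam + 1 ≤ p.1 := by
    intro p hp
    obtain ⟨m, hm, hpm⟩ := List.mem_iff_getElem.mp hp
    have hmb : m < j2 - j1 - 1 := by
      have h' := hm; rw [List.length_take, List.length_drop] at h'; omega
    have hm2 : j1 + 1 + m < ops.length := by omega
    have hval : (ops[j1+1+m]'hm2) = p := by
      rw [← hpm, List.getElem_take, List.getElem_drop]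
    have h1 := hpair (j1+1+m) j2 hm2 hj2 (by omega)
    have h2 := hiso2 (j1+1+m) hm2 (by omega)
    rw [hval] at h1 h2
    omega
  have hB : ∀ p ∈ ops.drop (j2+1), p.1 + lam + 1 ≤ i2 ∧ (p.2 = OpType.del → 1 ≤ p.1) := by
    intro p hp
    obtain ⟨m, hm, hpm⟩ := List.mem_iff_getElem.mp hp
    have hm2 : j2 + 1 + m < ops.length := by
      have h' := hm; rw [List.length_drop] at h'; omega
    have hval : (ops[j2+1+m]'hm2) = p := by rw [← hpm, List.getElem_drop]
    have h1 := hpair j2 (j2+1+m) hj2 hm2 (by omega)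
    have h2 := hiso2 (j2+1+m) hm2 (by omega)
    rw [hval] at h1 h2
    refine ⟨by omega, (hops1 p (List.mem_of_mem_drop hp)).2⟩
  have hBpw : List.Pairwise Rop (ops.drop (j2+1)) :=
    List.Pairwise.sublist (List.drop_sublist _ _) hpw
  obtain ⟨tail, htail⟩ := decompMain ((ops.drop (j1+1)).take (j2-j1-1)) (ops.drop (j2+1))
    (u.take (i1 - lam - 1)) i2 lam t2 hA hB hBpw hlow2
    (by rw [List.length_take]; omega)
  rw [sLen, sLen, FN, posN_eq ops j1 hj1, posN_eq ops j2 hj2, typN_eq ops j2 hj2,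
    ← hi1, ← hi2, ← ht2, hsplit, htail, List.take_take,
    (by omega : (i2 - lam - 1) ⊓ (i1 - lam - 1) = i2 - lam - 1),
    Fmid_take u (i1 - lam - 1) i2 lam t2 hlow2 (by omega)]
  rw [List.length_append, List.length_append]
  omega

theorem stmt4 (n k lam : ℕ) (hn : 1 ≤ n) (hk : 1 ≤ k) (hlam1 : 1 ≤ lam)
    (hlamn : lam ≤ n) (u v : List Bool) (hu : u.length = n) (hv : v.length = n)
    (hur : NonRepeating lam u) (hvr : NonRepeating lam v)
    (ops : List (ℕ × OpType)) (hops : ValidOps n ops) (hveq : v = applyOps u ops)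
    (hiso : 2 * k + 1 ≤
      Set.ncard {j : Fin (ops.map Prod.fst).length |
        IsolatedAt n lam (ops.map Prod.fst) j}) :
    k < delDist u v := by
  classical
  by_contra hcon
  rw [not_lt] at hcon
  have hmem : LCSlen u v ∈ {m : ℕ | ∃ w : List Bool, w.Sublist u ∧ w.Sublist v ∧ w.length = m} := by
    apply Nat.sSup_mem
    · exact ⟨0, [], List.nil_sublist _, List.nil_sublist _, rfl⟩
    · refine ⟨u.length, fun m hm => ?_⟩
      obtain ⟨w, hw, -, hl⟩ := hm
      exact hl ▸ hw.length_le
  obtain ⟨w, hwu, hwv, hwlen⟩ := hmem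
  have hdk : u.length - w.length ≤ k := by
    rw [hwlen]; exact hcon
  obtain ⟨f, hf⟩ := List.sublist_iff_exists_fin_orderEmbedding_get_eq.mp hwu
  obtain ⟨g, hg⟩ := List.sublist_iff_exists_fin_orderEmbedding_get_eq.mp hwv
  have hpw : List.Pairwise Rop ops := List.isChain_iff_pairwise.mp hops.2
  have hops1 : ∀ p ∈ ops, p.1 ≤ u.length ∧ (p.2 = OpType.del → 1 ≤ p.1) := by
    intro p hp
    have h := hops.1 p hp
    exact ⟨hu ▸ h.1, h.2⟩
  have hmaplen : (ops.map Prod.fst).length = ops.length := List.length_map _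
  set Iso := {j : Fin (ops.map Prod.fst).length | IsolatedAt n lam (ops.map Prod.fst) j}
    with hIsoDef
  have hjlt : ∀ j : Fin (ops.map Prod.fst).length, (j : ℕ) < ops.length := by
    intro j
    have := j.isLt
    omega
  have hget : ∀ j : Fin (ops.map Prod.fst).length,
      (ops.map Prod.fst).get j = posN ops j.1 := by
    intro j
    rw [List.get_eq_getElem, List.getElem_map, posN_eq ops j.1 (hjlt j)]
  have hbridge : ∀ j ∈ Iso,
      lam < posN ops j.1 ∧ posN ops j.1 + lam < n ∧
      (∀ j' (hj' : j' < ops.length), j' ≠ (j : ℕ) →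
        2*lam < (((ops[j']'hj').1 : ℤ) - ((posN ops j.1 : ℕ) : ℤ)).natAbs) := by
    intro j hj
    have hj' : IsolatedAt n lam (ops.map Prod.fst) j := hj
    simp only [IsolatedAt] at hj'
    obtain ⟨h1, h2, h3⟩ := hj'
    rw [hget] at h1 h2
    refine ⟨h1, h2, ?_⟩
    intro j' hj'lt hne
    have hj'2 : j' < (ops.map Prod.fst).length := by omega
    have hne2 : (⟨j', hj'2⟩ : Fin (ops.map Prod.fst).length) ≠ j :=
      Fin.ne_of_val_ne hne
    have h4 := h3 ⟨j', hj'2⟩ hne2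
    rw [hget ⟨j', hj'2⟩, hget j] at h4
    rwa [posN_eq ops j' hj'lt] at h4
  have hdec : ∀ j ∈ Iso, ∃ tail, v
      = applyOps (u.take (posN ops j.1 - lam - 1)) (ops.drop (j.1+1))
        ++ (FN u ops lam j.1 ++ tail) := by
    intro j hj
    obtain ⟨h1, h2, h3⟩ := hbridge j hj
    have h3' : ∀ j' (hj' : j' < ops.length), j' ≠ (j:ℕ) →
        2*lam < (((ops[j']'hj').1 : ℤ) - ((ops[(j:ℕ)]'(hjlt j)).1 : ℤ)).natAbs := by
      intro j' hj' hne
      have h4 := h3 j' hj' hne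
      rwa [posN_eq ops j.1 (hjlt j)] at h4
    obtain ⟨tail, htail⟩ := isoDecomp u ops lam hops1 hpw j.1 (hjlt j) h3'
      (by rwa [posN_eq ops j.1 (hjlt j)] at h1)
      (by rw [← posN_eq ops j.1 (hjlt j)]; omega)
    refine ⟨tail, ?_⟩
    rw [hveq, htail, FN, posN_eq ops j.1 (hjlt j), typN_eq ops j.1 (hjlt j)]
  have hFNlen : ∀ j ∈ Iso, 2*lam ≤ (FN u ops lam j.1).length
      ∧ (FN u ops lam j.1).length ≤ 2*lam+2 := by
    intro j hj
    obtain ⟨h1, h2, -⟩ := hbridge j hj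
    exact Fmid_length_ge u (posN ops j.1) lam (typN ops j.1) h1 (by omega)
  set V : Set ℕ := {q | q < v.length ∧ ∀ r : Fin w.length, (g r : ℕ) ≠ q} with hVdef
  set U : Set ℕ := {p | p < u.length ∧ ∀ r : Fin w.length, (f r : ℕ) ≠ p} with hUdef
  have key : ∀ j ∈ Iso,
      (∃ q ∈ V, sLen u ops lam j.1 ≤ q ∧
        q < sLen u ops lam j.1 + (FN u ops lam j.1).length) ∨
      (∃ p ∈ U, ∃ r0 r1 : Fin w.length, (g r0 : ℕ) = sLen u ops lam j.1 ∧
        (g r1 : ℕ) = sLen u ops lam j.1 + (FN u ops lam j.1).length - 1 ∧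
        (f r0 : ℕ) ≤ p ∧ p ≤ (f r1 : ℕ)) := by
    intro j hj
    obtain ⟨tail, hvdec⟩ := hdec j hj
    have hsF : sLen u ops lam j.1 + (FN u ops lam j.1).length ≤ v.length := by
      rw [hvdec]
      simp only [List.length_append, sLen]
      omega
    have hFel : ∀ m (hm : m < (FN u ops lam j.1).length),
        v[sLen u ops lam j.1 + m]'(by omega) = (FN u ops lam j.1)[m]'hm := by
      intro m hm
      have hb : (applyOps (u.take (posN ops j.1 - lam - 1)) (ops.drop (j.1+1))).length + m
          < (applyOps (u.take (posN ops j.1 - lam - 1)) (ops.drop (j.1+1))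
             ++ (FN u ops lam j.1 ++ tail)).length := by
        simp only [List.length_append]
        omega
      have hmid := getElem_middle _ (FN u ops lam j.1) tail m hm hb
      rw [← hmid]
      exact List.getElem_of_eq hvdec _
    obtain ⟨h1, h2, h3⟩ := hbridge j hj
    rcases windowCases u v w f g hf hg (sLen u ops lam j.1) (FN u ops lam j.1)
      (by have := hFNlen j hj; omega) hsF hFel with hc1 | hc2 | hc3
    · obtain ⟨q, hq1, hq2, hq3⟩ := hc1
      refine Or.inl ⟨q, ?_, hq1, hq2⟩
      rw [hVdef]
      exact ⟨by omega, hq3⟩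
    · obtain ⟨p, r0, r1, hr0, hr1, hp1, hp2, hp3⟩ := hc2
      refine Or.inr ⟨p, ?_, r0, r1, hr0, hr1, hp1, hp2⟩
      rw [hUdef]
      exact ⟨by have := (f r1).isLt; omega, hp3⟩
    · obtain ⟨P, hP1, hP2⟩ := hc3
      exfalso
      exact noGood u lam (posN ops j.1) P (typN ops j.1) hur hlam1 h1 (by omega) hP1 hP2
  have horder : ∀ j1 j2 : Fin (ops.map Prod.fst).length, j1 ∈ Iso → j2 ∈ Iso → j1 < j2 →
      sLen u ops lam j2.1 + (FN u ops lam j2.1).length ≤ sLen u ops lam j1.1 := by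
    intro j1 j2 hj1 hj2 hlt
    obtain ⟨h1, h2, h3⟩ := hbridge j2 hj2
    have h3' : ∀ j' (hj' : j' < ops.length), j' ≠ (j2:ℕ) →
        2*lam < (((ops[j']'hj').1 : ℤ) - ((ops[(j2:ℕ)]'(hjlt j2)).1 : ℤ)).natAbs := by
      intro j' hj' hne
      have h4 := h3 j' hj' hne
      rwa [posN_eq ops j2.1 (hjlt j2)] at h4
    exact isoOrder u ops lam hops1 hpw j1.1 j2.1 (hjlt j1) (hjlt j2)
      (Fin.lt_def.mp hlt) h3'
      (by rwa [posN_eq ops j2.1 (hjlt j2)] at h1)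
      (by rw [← posN_eq ops j2.1 (hjlt j2)]; omega)
  have hφex : ∀ j : Fin (ops.map Prod.fst).length, ∃ x : ℕ ⊕ ℕ, j ∈ Iso →
      (∃ q ∈ V, sLen u ops lam j.1 ≤ q ∧
        q < sLen u ops lam j.1 + (FN u ops lam j.1).length ∧ x = Sum.inl q) ∨
      (∃ p ∈ U, (∃ r0 r1 : Fin w.length, (g r0 : ℕ) = sLen u ops lam j.1 ∧
        (g r1 : ℕ) = sLen u ops lam j.1 + (FN u ops lam j.1).length - 1 ∧
        (f r0 : ℕ) ≤ p ∧ p ≤ (f r1 : ℕ)) ∧ x = Sum.inr p) := by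
    intro j
    by_cases hj : j ∈ Iso
    · rcases key j hj with ⟨q, hqV, hqa, hqb⟩ | ⟨p, hpU, hpr⟩
      · exact ⟨Sum.inl q, fun _ => Or.inl ⟨q, hqV, hqa, hqb, rfl⟩⟩
      · exact ⟨Sum.inr p, fun _ => Or.inr ⟨p, hpU, hpr, rfl⟩⟩
    · exact ⟨Sum.inl 0, fun h => absurd h hj⟩
  choose φ hφ using hφex
  have hmain : ∀ j1 j2, j1 ∈ Iso → j2 ∈ Iso → j1 < j2 → φ j1 ≠ φ j2 := by
    intro j1 j2 hj1 hj2 hlt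
    have hordlt := horder j1 j2 hj1 hj2 hlt
    have hlen2 := hFNlen j2 hj2
    rcases hφ j1 hj1 with ⟨q1, hq1V, hq1a, hq1b, hq1e⟩ |
        ⟨p1, hp1U, ⟨r0, r1, hr0, hr1, hpa, hpb⟩, hp1e⟩ <;>
      rcases hφ j2 hj2 with ⟨q2, hq2V, hq2a, hq2b, hq2e⟩ |
        ⟨p2, hp2U, ⟨s0, s1, hs0, hs1, hsa, hsb⟩, hp2e⟩
    · rw [hq1e, hq2e]
      intro hcontra
      have hqq : q1 = q2 := Sum.inl.inj hcontra
      omega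
    · rw [hq1e, hp2e]; simp
    · rw [hp1e, hq2e]; simp
    · rw [hp1e, hp2e]
      intro hcontra
      have hpp : p1 = p2 := Sum.inr.inj hcontra
      have hglt : s1 < r0 := by
        apply g.lt_iff_lt.mp
        apply Fin.lt_def.mpr
        rw [hs1, hr0]
        omega
      have hflt : (f s1 : ℕ) < (f r0 : ℕ) := Fin.lt_def.mp (f.lt_iff_lt.mpr hglt)
      omega
  have hinj : Set.InjOn φ Iso := by
    intro a ha b hb heq
    by_contra hne
    rcases Ne.lt_or_gt hne with h | h
    · exact hmain a b ha hb h heq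
    · exact hmain b a hb ha h heq.symm
  have himg : φ '' Iso ⊆ Sum.inl '' V ∪ Sum.inr '' U := by
    rintro x ⟨j, hj, rfl⟩
    rcases hφ j hj with ⟨q, hqV, -, -, hqe⟩ | ⟨p, hpU, -, hpe⟩
    · rw [hqe]; exact Or.inl ⟨q, hqV, rfl⟩
    · rw [hpe]; exact Or.inr ⟨p, hpU, rfl⟩
  have hfinV : V.Finite := by
    apply (Set.finite_Iio v.length).subset
    intro q hq
    rw [hVdef] at hq
    exact hq.1
  have hfinU : U.Finite := by
    apply (Set.finite_Iio u.length).subset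
    intro p hp
    rw [hUdef] at hp
    exact hp.1
  have hVcard : V.ncard ≤ k := by
    refine le_trans ?_ (by omega : v.length - w.length ≤ k)
    rw [hVdef]
    exact ncard_unmatched v w.length g (by omega)
  have hUcard : U.ncard ≤ k := by
    refine le_trans ?_ hdk
    rw [hUdef]
    exact ncard_unmatched u w.length f (by omega)
  have hfinal : Iso.ncard ≤ 2*k := by
    calc Iso.ncard = (φ '' Iso).ncard := (Set.ncard_image_of_injOn hinj).symm
      _ ≤ (Sum.inl '' V ∪ Sum.inr '' U).ncard :=
          Set.ncard_le_ncard himg ((hfinV.image _).union (hfinU.image _))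
      _ ≤ (Sum.inl '' V).ncard + (Sum.inr '' U).ncard := Set.ncard_union_le _ _
      _ = V.ncard + U.ncard := by
          rw [Set.ncard_image_of_injective _ Sum.inl_injective,
            Set.ncard_image_of_injective _ Sum.inr_injective]
      _ ≤ k + k := add_le_add hVcard hUcard
      _ = 2*k := by omega
  omega
end

section
/- For every integer c ≥ 1, the words u = (10)^⟨4c−2⟩ and v = (0110)^⟨4c−2⟩ (both of length 4c − 2) satisfy d(u,v) = c and m_LCS(u,v) = binomial(2c, c). -/
/-- `repPrefix x m` is the prefix of length `m` of the infinite periodic word `xxx⋯`. -/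
def repPrefix (x : List Bool) (m : ℕ) : List Bool :=
  (List.flatten (List.replicate m x)).take m



/-- greedy embedding cost into alternating word starting with `p` -/
def Aph : Bool → List Bool → ℕ
  | _, [] => 0
  | p, x :: w => if x = p then 1 + Aph (!p) w else 2 + Aph p w

/-- alternating word of length m starting with p -/
def seg : Bool → ℕ → List Bool
  | _, 0 => []
  | p, m+1 => p :: seg (!p) m

def patB : Bool → Bool → Bool
  | false, false => false
  | false, true => true
  | true, false => true
  | true, true => false

def nxtB : Bool → Bool → Bool × Bool
  | false, false => (false, true)
  | false, true => (true, false)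
  | true, false => (true, true)
  | true, true => (false, false)

def Bph : Bool → Bool → List Bool → ℕ
  | _, _, [] => 0
  | false, false, x :: w => if x = false then 1 + Bph false true w else 2 + Bph true false w
  | false, true,  x :: w => if x = true  then 1 + Bph true false w else 3 + Bph false false w
  | true,  false, x :: w => if x = true  then 1 + Bph true true w  else 2 + Bph false false w
  | true,  true,  x :: w => if x = false then 1 + Bph false false w else 3 + Bph true false w

def vseg : Bool → Bool → ℕ → List Bool
  | _, _, 0 => []
  | a, b, m+1 => patB a b :: vseg (nxtB a b).1 (nxtB a b).2 m

def dec : Bool → List Bool → List Bool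
  | _, [] => []
  | p, b :: ε => (if b then [!p, p] else [p]) ++ dec (!p) ε

def phEnd : Bool → List Bool → Bool
  | p, [] => p
  | p, _ :: ε => phEnd (!p) ε

def FL : ℕ → Finset (List Bool)
  | 0 => {[]}
  | n+1 => (FL n).image (List.cons true) ∪ (FL n).image (List.cons false)

-- basic lemmas
lemma seg_length : ∀ m p, (seg p m).length = m := by
  intro m; induction m with
  | zero => intro p; rfl
  | succ n ih => intro p; simp [seg, ih]

lemma skipA {x p : Bool} (h : x ≠ p) (w : List Bool) :
    Aph p (x :: w) = 1 + Aph (!p) (x :: w) := by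
  cases x <;> cases p <;> simp_all [Aph] <;> omega

lemma shiftA (p : Bool) (w : List Bool) : Aph p w ≤ 1 + Aph (!p) w := by
  cases w with
  | nil => simp [Aph]
  | cons x w => cases x <;> cases p <;> simp [Aph] <;> omega

lemma Aph_eq_zero {p : Bool} {w : List Bool} (h : Aph p w = 0) : w = [] := by
  cases w with
  | nil => rfl
  | cons x w => cases x <;> cases p <;> simp [Aph] at h

lemma sublist_seg_iff : ∀ m (w : List Bool) p, w.Sublist (seg p m) ↔ Aph p w ≤ m := by
  intro m
  induction m with
  | zero =>
    intro w p
    simp only [seg, List.sublist_nil, Nat.le_zero]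
    constructor
    · rintro rfl; rfl
    · exact fun h => Aph_eq_zero h
  | succ n ih =>
    intro w p
    constructor
    · intro h
      cases w with
      | nil => simp [Aph]
      | cons x w =>
        simp only [seg] at h
        rcases h with _ | _
        · -- x::w sublist of seg (!p) n
          calc Aph p (x :: w) ≤ 1 + Aph (!p) (x :: w) := shiftA _ _
            _ ≤ 1 + n := by have := (ih (x :: w) (!p)).1 ‹_›; omega
            _ ≤ n + 1 := by omega
        · -- heads equal
          have : Aph (!p) w ≤ n := (ih w (!p)).1 ‹_›
          simp [Aph, this]; omega
    · intro h
      cases w with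
      | nil => exact List.nil_sublist _
      | cons x w =>
        by_cases hx : x = p
        · subst hx
          have hA : Aph x (x :: w) = 1 + Aph (!x) w := by simp [Aph]
          rw [hA] at h
          have : Aph (!x) w ≤ n := by omega
          simpa [seg] using List.Sublist.cons₂ x ((ih w (!x)).2 this)
        · rw [skipA hx] at h
          have : Aph (!p) (x :: w) ≤ n := by omega
          simpa [seg] using List.Sublist.cons p ((ih (x :: w) (!p)).2 this)

lemma vseg_length : ∀ m a b, (vseg a b m).length = m := by
  intro m; induction m with
  | zero => intro a b; rfl
  | succ n ih => intro a b; simp [vseg, ih]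

lemma skipB {x a b : Bool} (h : x ≠ patB a b) (w : List Bool) :
    Bph a b (x :: w) = 1 + Bph (nxtB a b).1 (nxtB a b).2 (x :: w) := by
  cases x <;> cases a <;> cases b <;> simp_all [Bph, patB, nxtB] <;> omega

lemma shiftB : ∀ w : List Bool,
    (Bph false false w ≤ 1 + Bph false true w) ∧
    (Bph false true w ≤ 1 + Bph true false w) ∧
    (Bph true false w ≤ 1 + Bph true true w) ∧
    (Bph true true w ≤ 1 + Bph false false w) := by
  intro w
  induction w with
  | nil => simp [Bph]
  | cons x w ih => cases x <;> simp [Bph] <;> omega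

lemma Bph_eq_zero {a b : Bool} {w : List Bool} (h : Bph a b w = 0) : w = [] := by
  cases w with
  | nil => rfl
  | cons x w => cases x <;> cases a <;> cases b <;> simp [Bph] at h

lemma shiftB' (a b : Bool) (w : List Bool) :
    Bph a b w ≤ 1 + Bph (nxtB a b).1 (nxtB a b).2 w := by
  have := shiftB w
  cases a <;> cases b <;> simp [nxtB] <;> omega

lemma consB (a b : Bool) (w : List Bool) :
    Bph a b (patB a b :: w) = 1 + Bph (nxtB a b).1 (nxtB a b).2 w := by
  cases a <;> cases b <;> simp [Bph, patB, nxtB]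

lemma sublist_vseg_iff : ∀ m (w : List Bool) a b, w.Sublist (vseg a b m) ↔ Bph a b w ≤ m := by
  intro m
  induction m with
  | zero =>
    intro w a b
    simp only [vseg, List.sublist_nil, Nat.le_zero]
    constructor
    · rintro rfl; cases a <;> cases b <;> rfl
    · exact fun h => Bph_eq_zero h
  | succ n ih =>
    intro w a b
    constructor
    · intro h
      cases w with
      | nil => simp [Bph]
      | cons x w =>
        simp only [vseg] at h
        rcases h with _ | _
        · calc Bph a b (x :: w) ≤ 1 + Bph (nxtB a b).1 (nxtB a b).2 (x :: w) := shiftB' _ _ _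
            _ ≤ 1 + n := by have := (ih (x :: w) _ _).1 ‹_›; omega
            _ ≤ n + 1 := by omega
        · have : Bph (nxtB a b).1 (nxtB a b).2 w ≤ n := (ih w _ _).1 ‹_›
          rw [consB]; omega
    · intro h
      cases w with
      | nil => exact List.nil_sublist _
      | cons x w =>
        by_cases hx : x = patB a b
        · subst hx
          rw [consB] at h
          have : Bph (nxtB a b).1 (nxtB a b).2 w ≤ n := by omega
          simpa [vseg] using List.Sublist.cons₂ (patB a b) ((ih w _ _).2 this)
        · rw [skipB hx] at h
          have : Bph (nxtB a b).1 (nxtB a b).2 (x :: w) ≤ n := by omega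
          simpa [vseg] using List.Sublist.cons (patB a b) ((ih (x :: w) _ _).2 this)


lemma repPrefix_stable (x : List Bool) (hx : x ≠ []) (m k : ℕ) (hk : m ≤ k) :
    (List.flatten (List.replicate k x)).take m = repPrefix x m := by
  obtain ⟨j, rfl⟩ := Nat.exists_eq_add_of_le hk
  rw [List.replicate_add, List.flatten_append]
  have hlen : m ≤ ((List.replicate m x).flatten).length := by
    have : 1 ≤ x.length := List.length_pos_iff.2 hx
    simp only [List.length_flatten, List.map_replicate, List.sum_replicate, smul_eq_mul]
    nlinarith
  rw [List.take_append_of_le_length hlen]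
  rfl

lemma repPrefix_step (x : List Bool) (hx : x ≠ []) (m : ℕ) :
    repPrefix x (m + x.length) = x ++ repPrefix x m := by
  have hL : 1 ≤ x.length := List.length_pos_iff.2 hx
  have h1 : (m + x.length) = (m + x.length - 1) + 1 := by omega
  rw [repPrefix, h1, List.replicate_succ, List.flatten_cons, ← h1]
  have : m + x.length = x.length + m := by omega
  rw [this, List.take_append]
  rw [List.take_of_length_le (by omega), Nat.add_sub_cancel_left]
  rw [repPrefix_stable x hx m (x.length + m - 1) (by omega)]

lemma U_eq : ∀ m, repPrefix [true, false] m = seg true m := by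
  intro m
  induction m using Nat.strong_induction_on with
  | _ m ih =>
    match m with
    | 0 => rfl
    | 1 => rfl
    | (k+2) =>
      have h := repPrefix_step [true, false] (by simp) k
      simp only [List.length_cons, List.length_nil] at h
      have : k + 2 = k + (0+1+1) := by omega
      rw [this] at h ⊢
      rw [h, ih k (by omega)]
      rfl

lemma V_eq : ∀ m, repPrefix [false, true, true, false] m = vseg false false m := by
  intro m
  induction m using Nat.strong_induction_on with
  | _ m ih =>
    match m with
    | 0 => rfl
    | 1 => rfl
    | 2 => rfl
    | 3 => rfl
    | (k+4) =>
      have h := repPrefix_step [false, true, true, false] (by simp) k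
      simp only [List.length_cons, List.length_nil] at h
      have : k + 4 = k + (0+1+1+1+1) := by omega
      rw [this] at h ⊢
      rw [h, ih k (by omega)]
      rfl

lemma lb : ∀ w : List Bool,
    (4 * w.length ≤ 2 * Aph true w + Bph false false w) ∧
    (4 * w.length ≤ 2 * Aph true w + Bph false true w + 1) ∧
    (4 * w.length ≤ 2 * Aph false w + Bph true false w) ∧
    (4 * w.length ≤ 2 * Aph false w + Bph true true w + 1) := by
  intro w
  induction w with
  | nil => simp [Aph, Bph]
  | cons x w ih => cases x <;> simp [Aph, Bph, List.length_cons] <;> omega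

lemma dec_length : ∀ (ε : List Bool) (p : Bool),
    (dec p ε).length = ε.length + ε.count true := by
  intro ε
  induction ε with
  | nil => intro p; rfl
  | cons b ε ih =>
    intro p
    cases b <;> simp [dec, ih, List.count_cons] <;> omega

lemma dec_A : ∀ (ε : List Bool) (p : Bool) (rest : List Bool),
    Aph p (dec p ε ++ rest) = ε.length + 2 * ε.count true + Aph (phEnd p ε) rest := by
  intro ε
  induction ε with
  | nil => intro p rest; simp [dec, phEnd]
  | cons b ε ih =>
    intro p rest
    cases b
    · simp only [dec, if_neg (by simp : ¬ (false = true))]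
      have : Aph p ((([p] : List Bool) ++ dec (!p) ε) ++ rest) = 1 + Aph (!p) (dec (!p) ε ++ rest) := by
        simp [Aph]
      simp only [List.append_assoc] at this ⊢
      rw [this, ih (!p) rest]
      simp [phEnd, List.count_cons]
      omega
    · simp only [dec, if_pos rfl, if_true, ite_true]
      have : Aph p ((([!p, p] : List Bool) ++ dec (!p) ε) ++ rest)
           = 3 + Aph (!p) (dec (!p) ε ++ rest) := by
        cases p <;> simp [Aph] <;> omega
      simp only [List.append_assoc] at this ⊢
      rw [this, ih (!p) rest]
      simp [phEnd, List.count_cons]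
      omega

def bOf (p : Bool) : Bool × Bool := if p then (false, false) else (true, false)

lemma dec_B : ∀ (ε : List Bool) (p : Bool) (rest : List Bool),
    Bph (bOf p).1 (bOf p).2 (dec p ε ++ rest)
      = 2 * ε.length + Bph (bOf (phEnd p ε)).1 (bOf (phEnd p ε)).2 rest := by
  intro ε
  induction ε with
  | nil => intro p rest; simp [dec, phEnd]
  | cons b ε ih =>
    intro p rest
    cases b
    · simp only [dec, if_neg (by simp : ¬ (false = true))]
      have : Bph (bOf p).1 (bOf p).2 ((([p] : List Bool) ++ dec (!p) ε) ++ rest)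
           = 2 + Bph (bOf (!p)).1 (bOf (!p)).2 (dec (!p) ε ++ rest) := by
        cases p <;> simp [Bph, bOf] <;> omega
      simp only [List.append_assoc] at this ⊢
      rw [this, ih (!p) rest]
      simp [phEnd]
      omega
    · simp only [dec, if_pos rfl, if_true, ite_true]
      have : Bph (bOf p).1 (bOf p).2 ((([!p, p] : List Bool) ++ dec (!p) ε) ++ rest)
           = 2 + Bph (bOf (!p)).1 (bOf (!p)).2 (dec (!p) ε ++ rest) := by
        cases p <;> simp [Bph, bOf] <;> omega
      simp only [List.append_assoc] at this ⊢
      rw [this, ih (!p) rest]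
      simp [phEnd]
      omega

def cost (p : Bool) (w : List Bool) : ℕ :=
  2 * Aph p w + Bph (bOf p).1 (bOf p).2 w

lemma cost_short (p : Bool) (w : List Bool) :
    cost p (p :: w) = 4 + cost (!p) w := by
  cases p <;> simp [cost, Aph, Bph, bOf] <;> omega

lemma cost_long (p : Bool) (w : List Bool) :
    cost p ((!p) :: p :: w) = 8 + cost (!p) w := by
  cases p <;> simp [cost, Aph, Bph, bOf] <;> omega

lemma cost_bad (p : Bool) (w : List Bool) :
    cost p ((!p) :: (!p) :: w) = 12 + cost p w := by
  cases p <;> simp [cost, Aph, Bph, bOf] <;> omega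

lemma cost_lb (p : Bool) (w : List Bool) : 4 * w.length ≤ cost p w := by
  have := lb w
  cases p <;> simp [cost, bOf] <;> omega

lemma parse : ∀ (n : ℕ) (w : List Bool) (p : Bool), w.length ≤ n →
    cost p w ≤ 4 * w.length + 2 →
    (∃ ε, w = dec p ε) ∨ (∃ ε, w = dec p ε ++ [!(phEnd p ε)]) := by
  intro n
  induction n with
  | zero =>
    intro w p hlen _
    left
    exact ⟨[], by simpa [dec] using List.length_eq_zero_iff.mp (Nat.le_zero.mp hlen)⟩
  | succ n ih =>
    intro w p hlen hcost
    match w with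
    | [] => exact Or.inl ⟨[], rfl⟩
    | x :: w' =>
      by_cases hx : x = p
      · subst hx
        rw [cost_short] at hcost
        simp only [List.length_cons] at hcost hlen
        have h' := ih w' (!x) (by omega) (by omega)
        rcases h' with ⟨ε, rfl⟩ | ⟨ε, rfl⟩
        · exact Or.inl ⟨false :: ε, by simp [dec]⟩
        · exact Or.inr ⟨false :: ε, by simp [dec, phEnd]⟩
      · have hx' : x = !p := by cases x <;> cases p <;> simp_all
        subst hx'
        match w' with
        | [] => exact Or.inr ⟨[], by simp [dec, phEnd]⟩
        | y :: w'' =>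
          by_cases hy : y = p
          · rw [hy] at hcost ⊢
            rw [cost_long] at hcost
            simp only [List.length_cons] at hcost hlen
            have h' := ih w'' (!p) (by omega) (by omega)
            rcases h' with ⟨ε, rfl⟩ | ⟨ε, rfl⟩
            · exact Or.inl ⟨true :: ε, by simp [dec]⟩
            · exact Or.inr ⟨true :: ε, by simp [dec, phEnd]⟩
          · have hy' : y = !p := by cases y <;> cases p <;> simp_all
            rw [hy'] at hcost
            rw [cost_bad] at hcost
            have := cost_lb p w''
            simp only [List.length_cons] at hcost
            omega

lemma mem_FL : ∀ n (ε : List Bool), ε ∈ FL n ↔ ε.length = n := by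
  intro n
  induction n with
  | zero => intro ε; simp [FL, List.length_eq_zero_iff]
  | succ n ih =>
    intro ε
    cases ε with
    | nil => simp [FL]
    | cons b ε =>
      simp only [FL, Finset.mem_union, Finset.mem_image, List.length_cons]
      constructor
      · rintro (⟨a, ha, h⟩ | ⟨a, ha, h⟩) <;>
          · cases h; rw [(ih _).1 ha]
      · intro h
        have : ε ∈ FL n := (ih ε).2 (by omega)
        cases b
        · exact Or.inr ⟨ε, this, rfl⟩
        · exact Or.inl ⟨ε, this, rfl⟩

lemma card_FL : ∀ n k, ((FL n).filter (fun ε => ε.count true = k)).card = n.choose k := by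
  intro n
  induction n with
  | zero =>
    intro k
    cases k <;> simp [FL, Finset.filter_singleton]
  | succ n ih =>
    intro k
    rw [FL, Finset.filter_union]
    have hinjT : Function.Injective (List.cons true) := fun a b h => by injection h
    have hinjF : Function.Injective (List.cons false) := fun a b h => by injection h
    have hT : ((FL n).image (List.cons true)).filter (fun ε => ε.count true = k)
        = ((FL n).filter (fun ε => ε.count true + 1 = k)).image (List.cons true) := by
      rw [Finset.filter_image]
      congr 1
      ext ε
      simp [List.count_cons]
    have hF : ((FL n).image (List.cons false)).filter (fun ε => ε.count true = k)
        = ((FL n).filter (fun ε => ε.count true = k)).image (List.cons false) := by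
      rw [Finset.filter_image]
      congr 1
      try (ext ε; simp [List.count_cons])
    rw [hT, hF, Finset.card_union_of_disjoint, Finset.card_image_of_injective _ hinjT,
      Finset.card_image_of_injective _ hinjF]
    · cases k with
      | zero =>
        have : (FL n).filter (fun ε => ε.count true + 1 = 0) = ∅ := by
          apply Finset.filter_false_of_mem; intro x _; omega
        simp only [this, Finset.card_empty, Nat.zero_add]
        have := ih 0
        simpa using this
      | succ k =>
        have : (FL n).filter (fun ε => ε.count true + 1 = k + 1)
            = (FL n).filter (fun ε => ε.count true = k) := by
          apply Finset.filter_congr; intro x _; simp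
        rw [this, ih, ih, Nat.choose_succ_succ]
    · simp only [Finset.disjoint_left, Finset.mem_image]
      rintro w ⟨a, -, rfl⟩ ⟨b, -, h⟩
      exact absurd (List.head_eq_of_cons_eq h) (by simp)

lemma phEnd_eq : ∀ (ε : List Bool) (p : Bool),
    phEnd p ε = if ε.length % 2 = 0 then p else !p := by
  intro ε
  induction ε with
  | nil => intro p; simp [phEnd]
  | cons b ε ih =>
    intro p
    rw [phEnd, ih]
    rcases Nat.even_or_odd ε.length with h | h
    · have h2 : ε.length % 2 = 0 := Nat.even_iff.mp h
      have h4 : (ε.length + 1) % 2 = 1 := by omega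
      simp [List.length_cons, h2, h4]
    · have h2 : ε.length % 2 = 1 := Nat.odd_iff.mp h
      have h4 : (ε.length + 1) % 2 = 0 := by omega
      simp [List.length_cons, h2, h4]

lemma dec_inj : ∀ (ε₁ ε₂ : List Bool) (p : Bool), dec p ε₁ = dec p ε₂ → ε₁ = ε₂ := by
  intro ε₁
  induction ε₁ with
  | nil =>
    intro ε₂ p h
    cases ε₂ with
    | nil => rfl
    | cons b ε => cases b <;> simp [dec] at h
  | cons b₁ ε₁ ih =>
    intro ε₂ p h
    cases ε₂ with
    | nil => cases b₁ <;> simp [dec] at h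
    | cons b₂ ε₂ =>
      cases b₁ <;> cases b₂ <;> cases p <;> simp [dec] at h <;> simp [ih ε₂ _ h]

-- evaluation helpers
lemma Aph_tf : Aph true [false] = 2 := by simp [Aph]
lemma Aph_ft : Aph false [true] = 2 := by simp [Aph]
lemma Bph_f : Bph false false [false] = 1 := by simp [Bph]
lemma Bph_t : Bph true false [true] = 1 := by simp [Bph]

lemma dec_A' (ε : List Bool) : Aph true (dec true ε) = ε.length + 2 * ε.count true := by
  have := dec_A ε true []
  simpa [Aph] using this

lemma dec_B' (ε : List Bool) : Bph false false (dec true ε) = 2 * ε.length := by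
  have := dec_B ε true []
  simp only [bOf, if_pos trivial, List.append_nil] at this
  cases h : phEnd true ε <;> rw [h] at this <;> simpa [Bph, bOf] using this

lemma dec_B3 (ε : List Bool) (h : ε.length % 2 = 0) :
    Bph false false (dec true ε ++ [false]) = 2 * ε.length + 1 := by
  have := dec_B ε true [false]
  rw [phEnd_eq, if_pos h] at this
  simpa [Bph, bOf] using this

lemma dec_A3 (ε : List Bool) (h : ε.length % 2 = 0) :
    Aph true (dec true ε ++ [false]) = ε.length + 2 * ε.count true + 2 := by
  have := dec_A ε true [false]
  rw [phEnd_eq, if_pos h] at this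
  simpa [Aph] using this

theorem stmt11 (c : ℕ) (hc : 1 ≤ c) :
    delDist (repPrefix [true, false] (4 * c - 2))
        (repPrefix [false, true, true, false] (4 * c - 2)) = c ∧
    mLCS (repPrefix [true, false] (4 * c - 2))
        (repPrefix [false, true, true, false] (4 * c - 2)) = (2 * c).choose c := by
  obtain ⟨d, rfl⟩ : ∃ d, c = d + 1 := ⟨c - 1, by omega⟩
  rw [show 4 * (d + 1) - 2 = 4 * d + 2 by omega, show 2 * (d + 1) = 2 * d + 2 by omega]
  set U := repPrefix [true, false] (4 * d + 2) with hUdef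
  set V := repPrefix [false, true, true, false] (4 * d + 2) with hVdef
  have hU : ∀ w : List Bool, w.Sublist U ↔ Aph true w ≤ 4 * d + 2 := by
    intro w; rw [hUdef, U_eq]; exact sublist_seg_iff _ w true
  have hV : ∀ w : List Bool, w.Sublist V ↔ Bph false false w ≤ 4 * d + 2 := by
    intro w; rw [hVdef, V_eq]; exact sublist_vseg_iff _ w false false
  have hlenU : U.length = 4 * d + 2 := by rw [hUdef, U_eq, seg_length]
  -- witness
  set ε₀ : List Bool := List.replicate d true ++ List.replicate (d + 1) false with hε₀
  have hε₀len : ε₀.length = 2 * d + 1 := by simp [hε₀]; omega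
  have hε₀cnt : ε₀.count true = d := by simp [hε₀, List.count_replicate]
  have hw₀len : (dec true ε₀).length = 3 * d + 1 := by
    rw [dec_length, hε₀len, hε₀cnt]; omega
  have hw₀A : Aph true (dec true ε₀) ≤ 4 * d + 2 := by
    rw [dec_A', hε₀len, hε₀cnt]; omega
  have hw₀B : Bph false false (dec true ε₀) ≤ 4 * d + 2 := by
    rw [dec_B', hε₀len]; omega
  -- LCS length
  have hLCS : LCSlen U V = 3 * d + 1 := by
    rw [LCSlen]
    apply IsGreatest.csSup_eq
    constructor
    · exact ⟨dec true ε₀, (hU _).2 hw₀A, (hV _).2 hw₀B, hw₀len⟩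
    · rintro m ⟨w, hwu, hwv, rfl⟩
      have hA := (hU w).1 hwu
      have hB := (hV w).1 hwv
      have := cost_lb true w
      simp only [cost, bOf, if_pos trivial] at this
      omega
  constructor
  · simp only [delDist, hLCS, hlenU]; omega
  · -- counting
    classical
    set F1 : Finset (List Bool) :=
      ((FL (2 * d + 1)).filter (fun ε => ε.count true = d)).image (dec true) with hF1
    set F2 : Finset (List Bool) :=
      ((FL (2 * d)).filter (fun ε => ε.count true = d + 1)).image (dec true) with hF2
    set F3 : Finset (List Bool) :=
      ((FL (2 * d)).filter (fun ε => ε.count true = d)).image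
        (fun ε => dec true ε ++ [false]) with hF3
    have hdecinj : Function.Injective (dec true) := fun a b h => dec_inj a b true h
    -- B-values
    have hBval1 : ∀ w ∈ F1, Bph false false w = 4 * d + 2 := by
      rintro w hw
      rw [hF1] at hw
      obtain ⟨ε, hε, rfl⟩ := Finset.mem_image.1 hw
      obtain ⟨hεlen, -⟩ := Finset.mem_filter.1 hε
      rw [dec_B', (mem_FL _ _).1 hεlen]; omega
    have hBval2 : ∀ w ∈ F2, Bph false false w = 4 * d := by
      rintro w hw
      rw [hF2] at hw
      obtain ⟨ε, hε, rfl⟩ := Finset.mem_image.1 hw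
      obtain ⟨hεlen, -⟩ := Finset.mem_filter.1 hε
      rw [dec_B', (mem_FL _ _).1 hεlen]; omega
    have hBval3 : ∀ w ∈ F3, Bph false false w = 4 * d + 1 := by
      rintro w hw
      rw [hF3] at hw
      obtain ⟨ε, hε, rfl⟩ := Finset.mem_image.1 hw
      obtain ⟨hεlen, -⟩ := Finset.mem_filter.1 hε
      have hl := (mem_FL _ _).1 hεlen
      rw [dec_B3 ε (by omega), hl]; omega
    -- set equality
    have hset : {w : List Bool | w.Sublist U ∧ w.Sublist V ∧ w.length = LCSlen U V}
        = ↑(F1 ∪ F2 ∪ F3) := by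
      ext w
      simp only [Set.mem_setOf_eq, hLCS, Finset.coe_union, Set.mem_union, Finset.mem_coe]
      constructor
      · rintro ⟨hwu, hwv, hwl⟩
        have hA := (hU w).1 hwu
        have hB := (hV w).1 hwv
        have hcost : cost true w ≤ 4 * w.length + 2 := by
          simp only [cost, bOf, if_pos trivial]; omega
        rcases parse w.length w true le_rfl hcost with ⟨ε, rfl⟩ | ⟨ε, hw⟩
        · -- full form
          have h1 := dec_length ε true
          have h2 := dec_A' ε
          have h3 := dec_B' ε
          have hk : ε.count true = d ∨ ε.count true = d + 1 := by omega
          rcases hk with hk | hk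
          · left; left
            rw [hF1]
            exact Finset.mem_image.2 ⟨ε, Finset.mem_filter.2
              ⟨(mem_FL _ _).2 (by omega), hk⟩, rfl⟩
          · left; right
            rw [hF2]
            exact Finset.mem_image.2 ⟨ε, Finset.mem_filter.2
              ⟨(mem_FL _ _).2 (by omega), hk⟩, rfl⟩
        · -- partial form
          rcases Nat.even_or_odd ε.length with hpar | hpar
          · have hmod : ε.length % 2 = 0 := Nat.even_iff.mp hpar
            have hph : phEnd true ε = true := by rw [phEnd_eq, if_pos hmod]
            rw [hph] at hw
            simp only [Bool.not_true] at hw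
            subst hw
            have h1 := dec_length ε true
            have h2 := dec_A3 ε hmod
            have h3 := dec_B3 ε hmod
            have hwl' : (dec true ε ++ [false]).length = (dec true ε).length + 1 := by simp
            right
            rw [hF3]
            refine Finset.mem_image.2 ⟨ε, Finset.mem_filter.2
              ⟨(mem_FL _ _).2 ?_, ?_⟩, rfl⟩ <;> omega
          · exfalso
            have hmod : ε.length % 2 = 1 := Nat.odd_iff.mp hpar
            have hph : phEnd true ε = false := by rw [phEnd_eq]; simp [hmod]
            rw [hph] at hw
            simp only [Bool.not_false] at hw
            subst hw
            have h1 := dec_length ε true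
            have h2 : Aph true (dec true ε ++ [true])
                = ε.length + 2 * ε.count true + 2 := by
              have := dec_A ε true [true]
              rw [phEnd_eq] at this
              simp [hmod] at this
              simpa [Aph] using this
            have h3 : Bph false false (dec true ε ++ [true]) = 2 * ε.length + 1 := by
              have := dec_B ε true [true]
              rw [phEnd_eq] at this
              simp [hmod] at this
              simpa [Bph, bOf] using this
            have hwl' : (dec true ε ++ [true]).length = (dec true ε).length + 1 := by simp
            omega
      · intro hw
        have hmem : w ∈ F1 ∪ F2 ∪ F3 := by
          rcases hw with (h | h) | h
          · exact Finset.mem_union.2 (Or.inl (Finset.mem_union.2 (Or.inl h)))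
          · exact Finset.mem_union.2 (Or.inl (Finset.mem_union.2 (Or.inr h)))
          · exact Finset.mem_union.2 (Or.inr h)
        -- prove the three conditions
        rcases hw with (h | h) | h
        · rw [hF1] at h
          obtain ⟨ε, hε, rfl⟩ := Finset.mem_image.1 h
          obtain ⟨hεlen, hεcnt⟩ := Finset.mem_filter.1 hε
          have hl := (mem_FL _ _).1 hεlen
          refine ⟨(hU _).2 ?_, (hV _).2 ?_, ?_⟩
          · rw [dec_A', hl, hεcnt]; omega
          · rw [dec_B', hl]; omega
          · rw [dec_length, hl, hεcnt]; omega
        · rw [hF2] at h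
          obtain ⟨ε, hε, rfl⟩ := Finset.mem_image.1 h
          obtain ⟨hεlen, hεcnt⟩ := Finset.mem_filter.1 hε
          have hl := (mem_FL _ _).1 hεlen
          refine ⟨(hU _).2 ?_, (hV _).2 ?_, ?_⟩
          · rw [dec_A', hl, hεcnt]; omega
          · rw [dec_B', hl]; omega
          · rw [dec_length, hl, hεcnt]; omega
        · rw [hF3] at h
          obtain ⟨ε, hε, rfl⟩ := Finset.mem_image.1 h
          obtain ⟨hεlen, hεcnt⟩ := Finset.mem_filter.1 hε
          have hl := (mem_FL _ _).1 hεlen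
          refine ⟨(hU _).2 ?_, (hV _).2 ?_, ?_⟩
          · rw [dec_A3 ε (by omega), hl, hεcnt]; omega
          · rw [dec_B3 ε (by omega), hl]; omega
          · simp only [List.length_append, List.length_cons, List.length_nil]
            rw [dec_length, hl, hεcnt]; omega
    -- cardinality
    have hdisj12 : Disjoint F1 F2 := by
      rw [Finset.disjoint_left]
      intro w h1 h2
      have := hBval1 w h1
      have := hBval2 w h2
      omega
    have hdisj3 : Disjoint (F1 ∪ F2) F3 := by
      rw [Finset.disjoint_left]
      intro w h12 h3
      have hb3 := hBval3 w h3
      rcases Finset.mem_union.1 h12 with h | h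
      · have := hBval1 w h; omega
      · have := hBval2 w h; omega
    have hinj3 : Function.Injective (fun ε => dec true ε ++ [false]) := by
      intro a b h
      simp only at h
      exact dec_inj a b true (List.append_inj' h rfl).1
    have hcard : (F1 ∪ F2 ∪ F3).card = (2 * d + 2).choose (d + 1) := by
      rw [Finset.card_union_of_disjoint hdisj3, Finset.card_union_of_disjoint hdisj12]
      rw [hF1, hF2, hF3, Finset.card_image_of_injective _ hdecinj,
        Finset.card_image_of_injective _ hdecinj,
        Finset.card_image_of_injective _ hinj3, card_FL, card_FL, card_FL]
      have p1 : (2 * d + 2).choose (d + 1)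
          = (2 * d + 1).choose d + (2 * d + 1).choose (d + 1) :=
        Nat.choose_succ_succ (2 * d + 1) d
      have p2 : (2 * d + 1).choose (d + 1)
          = (2 * d).choose d + (2 * d).choose (d + 1) :=
        Nat.choose_succ_succ (2 * d) d
      omega
    rw [mLCS, hset, Set.ncard_coe_finset, hcard]
end

section
/- Define ℓ(a,b) := LCS((10)^⟨a⟩, (0110)^⟨b⟩). For all integers a, b ≥ 0 with b even: ℓ(a,b) = a if a ≤ b/2; ℓ(a,b) = b/2 + ⌊(2a − b)/4⌋ if b/2 < a ≤ 3b/2; and ℓ(a,b) = b if a > 3b/2. -/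
/-! ### A computable LCS -/

def lcsList : List Bool → List Bool → ℕ
  | [], _ => 0
  | _ :: _, [] => 0
  | x :: u, y :: v =>
    if x = y then lcsList u v + 1
    else max (lcsList (x :: u) v) (lcsList u (y :: v))
termination_by u v => u.length + v.length
decreasing_by all_goals simp_wf <;> omega

lemma lcs_nil_left (v : List Bool) : lcsList [] v = 0 := by rw [lcsList]

lemma lcs_nil_right (u : List Bool) : lcsList u [] = 0 := by
  cases u <;> rw [lcsList]

lemma lcs_cons_cons_s12 (x y : Bool) (u v : List Bool) :
    lcsList (x :: u) (y :: v) =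
      if x = y then lcsList u v + 1
      else max (lcsList (x :: u) v) (lcsList u (y :: v)) := by
  rw [lcsList]

lemma length_le_lcsList {u v w : List Bool} (hu : w.Sublist u) (hv : w.Sublist v) :
    w.length ≤ lcsList u v := by
  induction u, v using lcsList.induct generalizing w with
  | case1 v =>
    have : w = [] := List.sublist_nil.mp hu
    subst this; simp
  | case2 x u =>
    have : w = [] := List.sublist_nil.mp hv
    subst this; simp
  | case3 u y v ih =>
    rw [lcs_cons_cons_s12, if_pos rfl]
    cases w with
    | nil => simp
    | cons c w' =>
      cases hu with
      | cons _ hu' =>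
        cases hv with
        | cons _ hv' =>
          exact le_trans (ih hu' hv') (Nat.le_succ _)
        | cons_cons _ hv' =>
          have hu'' : w'.Sublist u := (List.sublist_cons_self _ _).trans hu'
          simpa using Nat.succ_le_succ (ih hu'' hv')
      | cons_cons _ hu' =>
        cases hv with
        | cons _ hv' =>
          have hv'' : w'.Sublist v := (List.sublist_cons_self _ _).trans hv'
          simpa using Nat.succ_le_succ (ih hu' hv'')
        | cons_cons _ hv' =>
          simpa using Nat.succ_le_succ (ih hu' hv')
  | case4 x u y v hxy ih1 ih2 =>
    rw [lcs_cons_cons_s12, if_neg hxy]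
    cases w with
    | nil => simp
    | cons c w' =>
      cases hu with
      | cons _ hu' =>
        exact le_trans (ih2 hu' hv) (le_max_right _ _)
      | cons_cons _ hu' =>
        cases hv with
        | cons _ hv' =>
          exact le_trans (ih1 (hu'.cons₂ _) hv') (le_max_left _ _)
        | cons_cons _ hv' => exact absurd rfl hxy

lemma exists_lcsList (u v : List Bool) :
    ∃ w : List Bool, w.Sublist u ∧ w.Sublist v ∧ w.length = lcsList u v := by
  induction u, v using lcsList.induct with
  | case1 v => exact ⟨[], List.nil_sublist _, List.nil_sublist _, by simp [lcs_nil_left]⟩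
  | case2 x u => exact ⟨[], List.nil_sublist _, List.nil_sublist _, by simp [lcs_nil_right]⟩
  | case3 u y v ih =>
    obtain ⟨w, h1, h2, h3⟩ := ih
    refine ⟨y :: w, List.Sublist.cons₂ y h1, List.Sublist.cons₂ y h2, ?_⟩
    rw [lcs_cons_cons_s12, if_pos rfl]; simp [h3]
  | case4 x u y v hxy ih1 ih2 =>
    rw [lcs_cons_cons_s12, if_neg hxy]
    rcases le_total (lcsList u (y :: v)) (lcsList (x :: u) v) with h | h
    · obtain ⟨w, h1, h2, h3⟩ := ih1
      exact ⟨w, h1, h2.trans (List.sublist_cons_self y v), by omega⟩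
    · obtain ⟨w, h1, h2, h3⟩ := ih2
      exact ⟨w, h1.trans (List.sublist_cons_self x u), h2, by omega⟩

lemma LCSlen_eq (u v : List Bool) : LCSlen u v = lcsList u v := by
  apply IsGreatest.csSup_eq
  constructor
  · exact exists_lcsList u v
  · rintro m ⟨w, h1, h2, rfl⟩
    exact length_le_lcsList h1 h2

/-! ### Rotation step for `repPrefix` -/

lemma flatten_replicate_succ (m : ℕ) (x : List Bool) :
    (List.replicate (m + 1) x).flatten = x ++ (List.replicate m x).flatten := by
  simp [List.replicate_succ]

lemma rot_flatten (x : Bool) (xs : List Bool) (m : ℕ) :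
    (List.replicate m (xs ++ [x])).flatten ++ xs
      = xs ++ (List.replicate m (x :: xs)).flatten := by
  induction m with
  | zero => simp
  | succ m ih =>
    rw [flatten_replicate_succ, flatten_replicate_succ, List.append_assoc, ih]
    simp

lemma length_flatten_replicate (m : ℕ) (x : List Bool) :
    ((List.replicate m x).flatten).length = m * x.length := by
  induction m with
  | zero => simp
  | succ m ih => rw [flatten_replicate_succ]; simp [ih]; ring

lemma repPrefix_cons (x : Bool) (xs : List Bool) (m : ℕ) :
    repPrefix (x :: xs) (m + 1) = x :: repPrefix (xs ++ [x]) m := by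
  unfold repPrefix
  rw [flatten_replicate_succ, List.cons_append, List.take_succ_cons]
  congr 1
  rw [← rot_flatten, List.take_append_of_le_length]
  rw [length_flatten_replicate]
  simp [Nat.le_mul_of_pos_right]

lemma repPrefix_zero (x : List Bool) : repPrefix x 0 = [] := by simp [repPrefix]

/-! ### The eight phase words -/

lemma u0_step (a : ℕ) : repPrefix [true, false] (a + 1) = true :: repPrefix [false, true] a := by
  simpa using repPrefix_cons true [false] a

lemma u1_step (a : ℕ) : repPrefix [false, true] (a + 1) = false :: repPrefix [true, false] a := by
  simpa using repPrefix_cons false [true] a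

lemma v0_step (b : ℕ) :
    repPrefix [false, true, true, false] (b + 1)
      = false :: repPrefix [true, true, false, false] b := by
  simpa using repPrefix_cons false [true, true, false] b

lemma v1_step (b : ℕ) :
    repPrefix [true, true, false, false] (b + 1)
      = true :: repPrefix [true, false, false, true] b := by
  simpa using repPrefix_cons true [true, false, false] b

lemma v2_step (b : ℕ) :
    repPrefix [true, false, false, true] (b + 1)
      = true :: repPrefix [false, false, true, true] b := by
  simpa using repPrefix_cons true [false, false, true] b

lemma v3_step (b : ℕ) :
    repPrefix [false, false, true, true] (b + 1)
      = false :: repPrefix [false, true, true, false] b := by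
  simpa using repPrefix_cons false [false, true, true] b

/-! ### Main induction -/

lemma main_lcs : ∀ n a b, a + b ≤ n →
    lcsList (repPrefix [true, false] a) (repPrefix [false, true, true, false] b)
      = min a (min b ((2 * a + b) / 4)) ∧
    lcsList (repPrefix [true, false] a) (repPrefix [true, true, false, false] b)
      = min a (min b ((2 * a + b + 1) / 4)) ∧
    lcsList (repPrefix [true, false] a) (repPrefix [true, false, false, true] b)
      = min a (min b ((2 * a + b + 2) / 4)) ∧
    lcsList (repPrefix [true, false] a) (repPrefix [false, false, true, true] b)
      = min a (min b ((2 * a + b - 1) / 4)) ∧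
    lcsList (repPrefix [false, true] a) (repPrefix [false, true, true, false] b)
      = min a (min b ((2 * a + b + 2) / 4)) ∧
    lcsList (repPrefix [false, true] a) (repPrefix [true, true, false, false] b)
      = min a (min b ((2 * a + b - 1) / 4)) ∧
    lcsList (repPrefix [false, true] a) (repPrefix [true, false, false, true] b)
      = min a (min b ((2 * a + b) / 4)) ∧
    lcsList (repPrefix [false, true] a) (repPrefix [false, false, true, true] b)
      = min a (min b ((2 * a + b + 1) / 4)) := by
  intro n
  induction n with
  | zero =>
    intro a b h
    have ha : a = 0 := by omega
    have hb : b = 0 := by omega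
    subst ha; subst hb
    simp only [repPrefix_zero, lcs_nil_left]; omega
  | succ n ih =>
    intro a b h
    match a, b with
    | 0, b => simp only [repPrefix_zero, lcs_nil_left]; omega
    | a + 1, 0 => simp only [repPrefix_zero, lcs_nil_right]; omega
    | a + 1, b + 1 =>
      have h1 : a + 1 + b <= n := by omega
      have h2 : a + (b + 1) <= n := by omega
      have h3 : a + b <= n := by omega
      refine ⟨?_, ?_, ?_, ?_, ?_, ?_, ?_, ?_⟩
      · rw [u0_step, v0_step, lcs_cons_cons_s12, if_neg (by decide), ← u0_step, ← v0_step,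
          (ih _ _ h1).2.1, (ih _ _ h2).2.2.2.2.1]
        omega
      · rw [u0_step, v1_step, lcs_cons_cons_s12, if_pos rfl,
          (ih _ _ h3).2.2.2.2.2.2.1]
        omega
      · rw [u0_step, v2_step, lcs_cons_cons_s12, if_pos rfl,
          (ih _ _ h3).2.2.2.2.2.2.2]
        omega
      · rw [u0_step, v3_step, lcs_cons_cons_s12, if_neg (by decide), ← u0_step, ← v3_step,
          (ih _ _ h1).1, (ih _ _ h2).2.2.2.2.2.2.2]
        omega
      · rw [u1_step, v0_step, lcs_cons_cons_s12, if_pos rfl,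
          (ih _ _ h3).2.1]
        omega
      · rw [u1_step, v1_step, lcs_cons_cons_s12, if_neg (by decide), ← u1_step, ← v1_step,
          (ih _ _ h1).2.2.2.2.2.2.1, (ih _ _ h2).2.1]
        omega
      · rw [u1_step, v2_step, lcs_cons_cons_s12, if_neg (by decide), ← u1_step, ← v2_step,
          (ih _ _ h1).2.2.2.2.2.2.2, (ih _ _ h2).2.2.1]
        omega
      · rw [u1_step, v3_step, lcs_cons_cons_s12, if_pos rfl,
          (ih _ _ h3).1]
        omega

theorem stmt12 (a b : ℕ) (hb : Even b) :
    (a ≤ b / 2 →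
      LCSlen (repPrefix [true, false] a) (repPrefix [false, true, true, false] b) = a) ∧
    (b / 2 < a → a ≤ 3 * b / 2 →
      LCSlen (repPrefix [true, false] a) (repPrefix [false, true, true, false] b)
        = b / 2 + (2 * a - b) / 4) ∧
    (3 * b / 2 < a →
      LCSlen (repPrefix [true, false] a) (repPrefix [false, true, true, false] b) = b) := by
  have key : LCSlen (repPrefix [true, false] a) (repPrefix [false, true, true, false] b)
      = min a (min b ((2 * a + b) / 4)) := by
    rw [LCSlen_eq]
    exact (main_lcs (a + b) a b le_rfl).1
  obtain ⟨k, rfl⟩ := hb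
  refine ⟨fun h1 => ?_, fun h1 h2 => ?_, fun h1 => ?_⟩ <;> rw [key] <;> omega
end

section
/- Define m(a,b) := m_LCS((10)^⟨a⟩, (0110)^⟨b⟩). For all integers a, b ≥ 0 with b even and b/2 ≤ a ≤ 3b/2: if 2a ≡ b (mod 4), then m(a,b) = binomial(b/2, (2a − b)/4), and if 2a ≡ b + 2 (mod 4), then m(a,b) = binomial(b/2 + 1, (2a − b + 2)/4). -/
def c2 : Bool → List Bool → ℕ
  | _, [] => 0
  | s, c :: w => (if c = s then 1 else 2) + c2 (!c) w

def altW : Bool → ℕ → List Bool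
  | _, 0 => []
  | s, n + 1 => s :: altW (!s) n

def P4 (p : ℕ) : Bool := p == 1 || p == 2

def W4 : ℕ → ℕ → List Bool
  | _, 0 => []
  | p, m + 1 => P4 p :: W4 ((p + 1) % 4) m

lemma repPrefix_take (x : List Bool) (a k : ℕ) (h : a ≤ k) (hx : x ≠ []) :
    (List.replicate k x).flatten.take a = repPrefix x a := by
  induction k with
  | zero => interval_cases a; rfl
  | succ k ih =>
    rcases Nat.eq_or_lt_of_le h with rfl | hlt
    · rfl
    · have h' : a ≤ k := by omega
      rw [← ih h']
      have : List.replicate (k+1) x = List.replicate k x ++ [x] := by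
        simpa using List.replicate_add k 1 x
      rw [this, List.flatten_append]
      refine List.take_append_of_le_length ?_
      have : 1 ≤ x.length := List.length_pos_iff.mpr hx
      calc a ≤ k := h'
        _ ≤ k * x.length := Nat.le_mul_of_pos_right k this
        _ = (List.replicate k x).flatten.length := by simp [Nat.mul_comm]

lemma rep2 : ∀ a, repPrefix [true, false] a = altW true a
  | 0 => rfl
  | 1 => rfl
  | (a+2) => by
    have ih := rep2 a
    unfold repPrefix
    have h1 : List.replicate (a+2) [true, false]
        = [true, false] :: List.replicate (a+1) [true, false] := rfl
    rw [h1, List.flatten_cons]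
    have h2 : ([true, false] ++ (List.replicate (a+1) [true, false]).flatten).take (a+2)
        = true :: false :: (List.replicate (a+1) [true, false]).flatten.take a := rfl
    rw [h2, repPrefix_take _ a (a+1) (by omega) (by simp), ih]
    simp [altW]

lemma rep4 : ∀ b, repPrefix [false, true, true, false] b = W4 0 b
  | 0 => rfl
  | 1 => rfl
  | 2 => rfl
  | 3 => rfl
  | (b+4) => by
    have ih := rep4 b
    unfold repPrefix
    have h1 : List.replicate (b+4) [false, true, true, false]
        = [false, true, true, false] :: List.replicate (b+3) [false, true, true, false] := rfl
    rw [h1, List.flatten_cons]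
    have h2 : (([false, true, true, false] : List Bool) ++ (List.replicate (b+3) [false, true, true, false]).flatten).take (b+4)
        = false :: true :: true :: false :: (List.replicate (b+3) [false, true, true, false]).flatten.take b := rfl
    rw [h2, repPrefix_take _ b (b+3) (by omega) (by simp), ih]
    show _ = W4 0 (b+4)
    simp [W4, P4]

def d4 : ℕ → Bool → ℕ
  | 0, false => 1 | 0, true => 2
  | 1, true => 1 | 1, false => 3
  | 2, true => 1 | 2, false => 2
  | 3, false => 1 | 3, true => 3
  | _, _ => 0

def n4 : ℕ → Bool → ℕ
  | 0, false => 1 | 0, true => 2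
  | 1, true => 2 | 1, false => 0
  | 2, true => 3 | 2, false => 0
  | 3, false => 0 | 3, true => 2
  | _, _ => 0

def c4 : ℕ → List Bool → ℕ
  | _, [] => 0
  | p, c :: w => d4 p c + c4 (n4 p c) w

lemma mono2 (w : List Bool) : ∀ s, c2 s w ≤ 1 + c2 (!s) w := by
  induction w with
  | nil => simp [c2]
  | cons c w ih =>
    intro s
    cases c <;> cases s <;> simp [c2] <;> omega

lemma sub2 : ∀ (a : ℕ) (s : Bool) (w : List Bool), w.Sublist (altW s a) ↔ c2 s w ≤ a := by
  intro a
  induction a with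
  | zero =>
    intro s w
    simp only [altW, List.sublist_nil]
    constructor
    · rintro rfl; simp [c2]
    · intro h; cases w with
      | nil => rfl
      | cons c w => exfalso; cases c <;> cases s <;> simp [c2] at h
  | succ a ih =>
    intro s w
    rw [show altW s (a+1) = s :: altW (!s) a from rfl]
    constructor
    · intro h
      rcases List.sublist_cons_iff.mp h with h' | ⟨r, rfl, hr⟩
      · have := (ih (!s) w).mp h'
        have := mono2 w s
        omega
      · have := (ih (!s) r).mp hr
        simp [c2, this]
        omega
    · intro h
      cases w with
      | nil => exact List.nil_sublist _
      | cons c w =>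
        by_cases hc : c = s
        · subst hc
          simp [c2] at h
          exact (List.cons_sublist_cons ..).mpr ((ih (!c) w).mpr (by omega))
        · have hcs : c = !s := by cases c <;> cases s <;> simp_all
          subst hcs
          have : c2 (!s) ((!s) :: w) ≤ a := by
            simp [c2] at h ⊢
            omega
          exact ((ih (!s) _).mpr this).cons _

lemma mono4 (w : List Bool) : ∀ p, p < 4 → c4 p w ≤ 1 + c4 ((p + 1) % 4) w := by
  induction w with
  | nil => simp [c4]
  | cons c w ih =>
    intro p hp
    have i0 : c4 0 w ≤ 1 + c4 1 w := by simpa using ih 0 (by omega)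
    have i1 : c4 1 w ≤ 1 + c4 2 w := by simpa using ih 1 (by omega)
    have i2 : c4 2 w ≤ 1 + c4 3 w := by simpa using ih 2 (by omega)
    have i3 : c4 3 w ≤ 1 + c4 0 w := by simpa using ih 3 (by omega)
    interval_cases p <;> cases c <;>
      simp only [c4, d4, n4, Nat.reduceMod, Nat.reduceAdd] <;> omega

lemma c4_shift (p : ℕ) (hp : p < 4) (c : Bool) (w : List Bool) (hc : c ≠ P4 p) :
    c4 p (c :: w) = 1 + c4 ((p + 1) % 4) (c :: w) := by
  interval_cases p <;> cases c <;> simp_all [c4, d4, n4, P4] <;> omega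

lemma sub4 : ∀ (m p : ℕ), p < 4 → ∀ w : List Bool, (w.Sublist (W4 p m) ↔ c4 p w ≤ m) := by
  intro m
  induction m with
  | zero =>
    intro p hp w
    simp only [W4, List.sublist_nil]
    constructor
    · rintro rfl; simp [c4]
    · intro h; cases w with
      | nil => rfl
      | cons c w => exfalso; interval_cases p <;> cases c <;> simp [c4, d4] at h
  | succ m ih =>
    intro p hp w
    rw [show W4 p (m+1) = P4 p :: W4 ((p+1) % 4) m from rfl]
    have hp4 : (p + 1) % 4 < 4 := Nat.mod_lt _ (by omega)
    constructor
    · intro h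
      rcases List.sublist_cons_iff.mp h with h' | ⟨r, rfl, hr⟩
      · have := (ih _ hp4 w).mp h'
        have := mono4 w p hp
        omega
      · have hr' := (ih _ hp4 r).mp hr
        have hd : d4 p (P4 p) = 1 ∧ n4 p (P4 p) = (p + 1) % 4 := by
          interval_cases p <;> simp [d4, n4, P4]
        simp [c4, hd.1, hd.2]
        omega
    · intro h
      cases w with
      | nil => exact List.nil_sublist _
      | cons c w =>
        by_cases hc : c = P4 p
        · subst hc
          have hd : d4 p (P4 p) = 1 ∧ n4 p (P4 p) = (p + 1) % 4 := by
            interval_cases p <;> simp [d4, n4, P4]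
          simp [c4, hd.1, hd.2] at h
          exact (List.cons_sublist_cons ..).mpr ((ih _ hp4 w).mpr (by omega))
        · have := c4_shift p hp c w hc
          exact ((ih _ hp4 _).mpr (by omega)).cons _

def psi : Bool → ℕ → ℕ
  | true, 0 => 0 | true, 1 => 1 | true, 2 => 2 | true, 3 => 0
  | false, 0 => 2 | false, 1 => 0 | false, 2 => 0 | false, 3 => 1
  | _, _ => 0

def px (x : Bool) : ℕ := if x then 0 else 2

lemma pot (w : List Bool) : ∀ s p, p < 4 → 4 * w.length ≤ 2 * c2 s w + c4 p w + psi s p := by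
  induction w with
  | nil => simp [c4, c2]
  | cons c w ih =>
    intro s p hp
    have h := ih (!c) (n4 p c) (by interval_cases p <;> cases c <;> simp [n4])
    interval_cases p <;> cases s <;> cases c <;>
      simp [c2, c4, d4, n4, psi] at h ⊢ <;> omega

def wd : Bool → List Bool → Bool → List Bool
  | _, [], false => []
  | x, [], true => [(!x)]
  | x, false :: ℓ, d => x :: wd (!x) ℓ d
  | x, true :: ℓ, d => (!x) :: x :: wd (!x) ℓ d

lemma wd_len (ℓ : List Bool) : ∀ x d, (wd x ℓ d).length = ℓ.length + ℓ.count true + d.toNat := by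
  induction ℓ with
  | nil => intro x d; cases d <;> simp [wd]
  | cons g ℓ ih => intro x d; cases g <;> simp [wd, ih, List.count_cons] <;> omega

lemma wd_c2 (ℓ : List Bool) : ∀ x d, c2 x (wd x ℓ d) = ℓ.length + 2 * ℓ.count true + 2 * d.toNat := by
  induction ℓ with
  | nil => intro x d; cases d <;> cases x <;> simp [wd, c2]
  | cons g ℓ ih =>
    intro x d
    cases g <;> cases x <;> simp [wd, c2, ih, List.count_cons] <;> omega

lemma wd_c4 (ℓ : List Bool) : ∀ x d, c4 (px x) (wd x ℓ d) = 2 * ℓ.length + d.toNat := by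
  induction ℓ with
  | nil => intro x d; cases d <;> cases x <;> simp [wd, c4, px, d4]
  | cons g ℓ ih =>
    intro x d
    have h := ih (!x) d
    cases g <;> cases x <;>
      simp [wd, c4, d4, n4, px] at h ⊢ <;> omega

lemma c2_short (x : Bool) (w : List Bool) : c2 x (x :: w) = 1 + c2 (!x) w := by
  cases x <;> simp [c2]

lemma c2_n (x : Bool) (w : List Bool) : c2 x ((!x) :: w) = 2 + c2 x w := by
  cases x <;> simp [c2]

lemma c4_short (x : Bool) (w : List Bool) : c4 (px x) (x :: w) = 2 + c4 (px (!x)) w := by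
  cases x <;> simp [c4, px, d4, n4] <;> omega

lemma c4_long (x : Bool) (w : List Bool) : c4 (px x) ((!x) :: x :: w) = 2 + c4 (px (!x)) w := by
  cases x <;> simp [c4, px, d4, n4] <;> omega

lemma c4_bad (x : Bool) (w : List Bool) : c4 (px x) ((!x) :: (!x) :: w) = 4 + c4 (px x) w := by
  cases x <;> simp [c4, px, d4, n4] <;> omega

lemma px_lt (x : Bool) : px x < 4 := by cases x <;> simp [px]

lemma CL : ∀ (n : ℕ) (w : List Bool), w.length ≤ n → ∀ (x : Bool) (a b : ℕ),
    c2 x w ≤ a → c4 (px x) w ≤ b → 2 * a + b ≤ 4 * w.length + 2 →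
    ∃ ℓ d, w = wd x ℓ d := by
  intro n
  induction n with
  | zero =>
    intro w hw x a b _ _ _
    have : w = [] := List.eq_nil_of_length_eq_zero (by omega)
    exact ⟨[], false, by simp [this, wd]⟩
  | succ n ih =>
    intro w hw x a b h2 h4 hbud
    match w with
    | [] => exact ⟨[], false, by simp [wd]⟩
    | c :: w' =>
      by_cases hc : c = x
      · subst hc
        rw [c2_short] at h2
        rw [c4_short] at h4
        obtain ⟨ℓ, d, rfl⟩ := ih w' (by simpa using hw) (!c) (a - 1) (b - 2)
          (by omega) (by omega) (by simp at hbud ⊢; omega)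
        exact ⟨false :: ℓ, d, rfl⟩
      · have hcx : c = !x := by cases c <;> cases x <;> simp_all
        subst hcx
        match w' with
        | [] => exact ⟨[], true, rfl⟩
        | c' :: w'' =>
          by_cases hc' : c' = x
          · subst hc'
            rw [c2_n, c2_short] at h2
            rw [c4_long] at h4
            obtain ⟨ℓ, d, rfl⟩ := ih w'' (by simp at hw ⊢; omega) (!c') (a - 3) (b - 2)
              (by omega) (by omega) (by simp at hbud ⊢; omega)
            exact ⟨true :: ℓ, d, rfl⟩
          · exfalso
            have hcx' : c' = !x := by cases c' <;> cases x <;> simp_all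
            subst hcx'
            rw [c2_n, c2_n] at h2
            rw [c4_bad] at h4
            have := pot w'' x (px x) (px_lt x)
            have hps : psi x (px x) = 0 := by cases x <;> simp [psi, px]
            simp [hps] at this
            simp at hbud
            omega

lemma wd_inj : ∀ (ℓ ℓ' : List Bool) (x d : Bool), wd x ℓ d = wd x ℓ' d → ℓ = ℓ' := by
  intro ℓ
  induction ℓ with
  | nil =>
    intro ℓ' x d h
    match ℓ', d with
    | [], _ => rfl
    | false :: ℓ', false => simp [wd] at h
    | false :: ℓ', true => simp [wd] at h
    | true :: ℓ', false => simp [wd] at h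
    | true :: ℓ', true => simp [wd] at h
  | cons g ℓ ih =>
    intro ℓ' x d h
    match ℓ', g with
    | [], false => cases d <;> simp [wd] at h
    | [], true => cases d <;> simp [wd] at h
    | false :: ℓ', false => simp [wd] at h; rw [ih ℓ' (!x) d h]
    | true :: ℓ', true => simp [wd] at h; rw [ih ℓ' (!x) d h]
    | false :: ℓ', true => simp [wd] at h
    | true :: ℓ', false => simp [wd] at h

def longs : ℕ → ℕ → Finset (List Bool)
  | 0, 0 => {[]}
  | 0, _ + 1 => ∅
  | m + 1, 0 => (longs m 0).image (false :: ·)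
  | m + 1, k + 1 => (longs m (k + 1)).image (false :: ·) ∪ (longs m k).image (true :: ·)

lemma mem_longs : ∀ m k ℓ, ℓ ∈ longs m k ↔ ℓ.length = m ∧ ℓ.count true = k := by
  intro m
  induction m with
  | zero =>
    intro k ℓ
    match k with
    | 0 =>
      simp only [longs, Finset.mem_singleton]
      constructor
      · rintro rfl; simp
      · intro ⟨h1, _⟩; exact List.eq_nil_of_length_eq_zero h1
    | k + 1 =>
      simp only [longs, Finset.notMem_empty, false_iff, not_and]
      intro h1 h2
      have : ℓ = [] := List.eq_nil_of_length_eq_zero h1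
      subst this; simp at h2
  | succ m ih =>
    intro k ℓ
    match k with
    | 0 =>
      simp only [longs, Finset.mem_image]
      constructor
      · rintro ⟨t, ht, rfl⟩
        have := (ih 0 t).mp ht
        simp [List.count_cons, this.1, this.2]
      · intro ⟨h1, h2⟩
        match ℓ with
        | [] => simp at h1
        | true :: t => simp [List.count_cons] at h2
        | false :: t =>
          refine ⟨t, (ih 0 t).mpr ⟨by simpa using h1, by simpa using h2⟩, rfl⟩
    | k + 1 =>
      simp only [longs, Finset.mem_union, Finset.mem_image]
      constructor
      · rintro (⟨t, ht, rfl⟩ | ⟨t, ht, rfl⟩)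
        · have := (ih (k+1) t).mp ht
          simp [List.count_cons, this.1, this.2]
        · have := (ih k t).mp ht
          simp [List.count_cons, this.1, this.2]
      · intro ⟨h1, h2⟩
        match ℓ with
        | [] => simp at h1
        | false :: t =>
          exact Or.inl ⟨t, (ih (k+1) t).mpr ⟨by simpa using h1, by simpa using h2⟩, rfl⟩
        | true :: t =>
          refine Or.inr ⟨t, (ih k t).mpr ⟨by simpa using h1, ?_⟩, rfl⟩
          simp [List.count_cons] at h2
          omega

lemma longs_card : ∀ m k, (longs m k).card = m.choose k := by
  intro m
  induction m with
  | zero => intro k; match k with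
    | 0 => simp [longs]
    | k + 1 => simp [longs]
  | succ m ih =>
    intro k
    match k with
    | 0 =>
      rw [longs, Finset.card_image_of_injective _ (by intro a b h; simpa using h)]
      simp [ih]
    | k + 1 =>
      rw [longs, Finset.card_union_of_disjoint, Finset.card_image_of_injective _
          (by intro a b h; simpa using h), Finset.card_image_of_injective _
          (by intro a b h; simpa using h), ih, ih, Nat.choose_succ_succ']
      · omega
      · simp only [Finset.disjoint_left, Finset.mem_image]
        rintro ℓ ⟨t, _, rfl⟩ ⟨t', _, h⟩
        simp at h

lemma wd_props (a2 b2 L m k : ℕ) (ℓ : List Bool) (d : Bool) (hℓ : ℓ ∈ longs m k)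
    (h2 : m + 2 * k + 2 * d.toNat ≤ a2) (h4 : 2 * m + d.toNat ≤ b2)
    (hL : m + k + d.toNat = L) :
    c2 true (wd true ℓ d) ≤ a2 ∧ c4 0 (wd true ℓ d) ≤ b2 ∧ (wd true ℓ d).length = L := by
  obtain ⟨hlen, hcount⟩ := (mem_longs m k ℓ).mp hℓ
  have e2 := wd_c2 ℓ true d
  have e4 := wd_c4 ℓ true d
  have el := wd_len ℓ true d
  simp [px] at e2 e4
  rw [e2, e4, el, hlen, hcount]
  exact ⟨h2, h4, hL⟩

lemma main_aux (a b L : ℕ) (F : Finset (List Bool))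
    (hmem : ∀ w ∈ F, c2 true w ≤ a ∧ c4 0 w ≤ b ∧ w.length = L)
    (hne : F.Nonempty)
    (hupper : ∀ w : List Bool, c2 true w ≤ a → c4 0 w ≤ b → w.length ≤ L)
    (hclass : ∀ w : List Bool, c2 true w ≤ a → c4 0 w ≤ b → w.length = L → w ∈ F) :
    mLCS (repPrefix [true, false] a) (repPrefix [false, true, true, false] b) = F.card := by
  have hsub : ∀ w : List Bool,
      (w.Sublist (repPrefix [true, false] a) ∧ w.Sublist (repPrefix [false, true, true, false] b))
      ↔ (c2 true w ≤ a ∧ c4 0 w ≤ b) := by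
    intro w
    rw [rep2, rep4, sub2 a true w, sub4 b 0 (by omega) w]
  have hLCS : LCSlen (repPrefix [true, false] a) (repPrefix [false, true, true, false] b) = L := by
    unfold LCSlen
    obtain ⟨w0, hw0⟩ := hne
    obtain ⟨h1, h2, h3⟩ := hmem w0 hw0
    have hmemL : L ∈ {m : ℕ | ∃ w : List Bool,
        w.Sublist (repPrefix [true, false] a) ∧ w.Sublist (repPrefix [false, true, true, false] b)
        ∧ w.length = m} := ⟨w0, ((hsub w0).mpr ⟨h1, h2⟩).1, ((hsub w0).mpr ⟨h1, h2⟩).2, h3⟩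
    have hbd : ∀ m ∈ {m : ℕ | ∃ w : List Bool,
        w.Sublist (repPrefix [true, false] a) ∧ w.Sublist (repPrefix [false, true, true, false] b)
        ∧ w.length = m}, m ≤ L := by
      rintro m ⟨w, hwu, hwv, rfl⟩
      obtain ⟨hc2, hc4⟩ := (hsub w).mp ⟨hwu, hwv⟩
      exact hupper w hc2 hc4
    exact le_antisymm (csSup_le ⟨L, hmemL⟩ hbd) (le_csSup ⟨L, hbd⟩ hmemL)
  unfold mLCS
  rw [hLCS]
  have hset : {w : List Bool |
      w.Sublist (repPrefix [true, false] a) ∧ w.Sublist (repPrefix [false, true, true, false] b)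
      ∧ w.length = L} = ↑F := by
    ext w
    simp only [Set.mem_setOf_eq, Finset.coe_sort_coe, Finset.mem_coe]
    constructor
    · rintro ⟨hwu, hwv, hlen⟩
      obtain ⟨hc2, hc4⟩ := (hsub w).mp ⟨hwu, hwv⟩
      exact hclass w hc2 hc4 hlen
    · intro hw
      obtain ⟨h1, h2, h3⟩ := hmem w hw
      obtain ⟨hu, hv⟩ := (hsub w).mpr ⟨h1, h2⟩
      exact ⟨hu, hv, h3⟩
  have : ∀ w : List Bool, (w.Sublist (repPrefix [true, false] a) ∧
      w.Sublist (repPrefix [false, true, true, false] b) ∧ w.length = L) ↔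
      (w.Sublist (repPrefix [true, false] a) ∧ w.Sublist (repPrefix [false, true, true, false] b))
      ∧ w.length = L := by tauto
  rw [show {w : List Bool | w.Sublist (repPrefix [true, false] a) ∧
      w.Sublist (repPrefix [false, true, true, false] b) ∧ w.length = L} = ↑F from hset]
  exact Set.ncard_coe_finset F

lemma wd_inj' (d : Bool) : Function.Injective (fun ℓ => wd true ℓ d) := by
  intro x y h
  exact wd_inj x y true d h

theorem stmt13 (a b : ℕ) (hb : Even b) (h1 : b / 2 ≤ a) (h2 : a ≤ 3 * b / 2) :
    (2 * a % 4 = b % 4 →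
      mLCS (repPrefix [true, false] a) (repPrefix [false, true, true, false] b)
        = (b / 2).choose ((2 * a - b) / 4)) ∧
    (2 * a % 4 = (b + 2) % 4 →
      mLCS (repPrefix [true, false] a) (repPrefix [false, true, true, false] b)
        = (b / 2 + 1).choose ((2 * a - b + 2) / 4)) := by
  obtain ⟨n, rfl⟩ := hb
  have hbn : n + n = 2 * n := by ring
  rw [hbn] at h1 h2 ⊢
  have hn2 : 2 * n / 2 = n := by omega
  have h1' : n ≤ a := by omega
  have h2' : a ≤ 3 * n := by omega
  constructor
  · -- case 1
    intro hc
    obtain ⟨j, hj⟩ : ∃ j, a = n + 2 * j := by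
      have : (2 * a - 2 * n) % 4 = 0 := by omega
      exact ⟨(2 * a - 2 * n) / 4, by omega⟩
    have hjn : j ≤ n := by omega
    have hgoal : (2 * n / 2).choose ((2 * a - 2 * n) / 4) = n.choose j := by
      rw [hn2]; congr 1; omega
    rw [hgoal]
    rw [← longs_card n j]
    refine main_aux a (2 * n) (n + j) ((longs n j).image (fun ℓ => wd true ℓ false)) ?_ ?_ ?_ ?_ |>.trans
      (Finset.card_image_of_injective _ (wd_inj' false))
    · rintro w hw
      simp only [Finset.mem_image] at hw
      obtain ⟨ℓ, hℓ, rfl⟩ := hw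
      exact wd_props a (2 * n) (n + j) n j ℓ false hℓ
        (by simp <;> omega) (by simp <;> omega) (by simp <;> omega)
    · refine ⟨wd true (List.replicate j true ++ List.replicate (n - j) false) false, ?_⟩
      simp only [Finset.mem_image]
      refine ⟨_, (mem_longs n j _).mpr ⟨by simp <;> omega, by simp [List.count_replicate]⟩, rfl⟩
    · intro w hw2 hw4
      have := pot w true 0 (by omega)
      simp [psi] at this
      omega
    · intro w hw2 hw4 hlen
      obtain ⟨ℓ, d, rfl⟩ := CL w.length w le_rfl true a (2 * n)
        (by simpa [px] using hw2) (by simpa [px] using hw4) (by omega)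
      have e2 := wd_c2 ℓ true d
      have e4 := wd_c4 ℓ true d
      have el := wd_len ℓ true d
      simp [px] at e2 e4
      rw [e2] at hw2
      rw [e4] at hw4
      rw [el] at hlen
      have hd : d = false := by
        cases d
        · rfl
        · exfalso; simp at hw2 hw4 hlen; omega
      subst hd
      simp only [Bool.toNat_false] at hw2 hw4 hlen
      simp only [Finset.mem_image]
      exact ⟨ℓ, (mem_longs n j ℓ).mpr ⟨by omega, by omega⟩, rfl⟩
  · -- case 2
    intro hc
    obtain ⟨j, hj⟩ : ∃ j, a + 1 = n + 2 * j := by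
      have : (2 * a + 2 - 2 * n) % 4 = 0 := by omega
      exact ⟨(2 * a + 2 - 2 * n) / 4, by omega⟩
    have hj1 : 1 ≤ j := by omega
    have hjn : j ≤ n := by omega
    have hn1 : 1 ≤ n := by omega
    have hgoal : (2 * n / 2 + 1).choose ((2 * a - 2 * n + 2) / 4) = (n + 1).choose j := by
      rw [hn2]; congr 1; omega
    rw [hgoal]
    set F1 := (longs n (j - 1)).image (fun ℓ => wd true ℓ false) with hF1
    set F2 := (longs (n - 1) j).image (fun ℓ => wd true ℓ false) with hF2
    set F3 := (longs (n - 1) (j - 1)).image (fun ℓ => wd true ℓ true) with hF3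
    have hcard : (F1 ∪ F2 ∪ F3).card = (n + 1).choose j := by
      have hd12 : Disjoint F1 F2 := by
        simp only [Finset.disjoint_left, hF1, hF2, Finset.mem_image]
        rintro w ⟨t, ht, rfl⟩ ⟨t', ht', heq⟩
        have l1 := ((mem_longs _ _ t).mp ht).1
        have l2 := ((mem_longs _ _ t').mp ht').1
        have := congrArg (c4 0) heq
        have e1 := wd_c4 t true false
        have e2 := wd_c4 t' true false
        simp [px] at e1 e2
        rw [e1, e2] at this
        omega
      have hd123 : Disjoint (F1 ∪ F2) F3 := by
        simp only [Finset.disjoint_left, hF1, hF2, hF3, Finset.mem_union, Finset.mem_image]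
        rintro w (⟨t, ht, rfl⟩ | ⟨t, ht, rfl⟩) ⟨t', ht', heq⟩ <;>
        · have l1 := ((mem_longs _ _ t).mp ht).1
          have l2 := ((mem_longs _ _ t').mp ht').1
          have := congrArg (c4 0) heq
          have e1 := wd_c4 t true false
          have e2 := wd_c4 t' true true
          simp [px] at e1 e2
          rw [e1, e2] at this
          omega
      rw [Finset.card_union_of_disjoint hd123, Finset.card_union_of_disjoint hd12,
        hF1, hF2, hF3, Finset.card_image_of_injective _ (wd_inj' false),
        Finset.card_image_of_injective _ (wd_inj' false),
        Finset.card_image_of_injective _ (wd_inj' true),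
        longs_card, longs_card, longs_card]
      obtain ⟨m, rfl⟩ : ∃ m, n = m + 1 := ⟨n - 1, by omega⟩
      obtain ⟨k, rfl⟩ : ∃ k, j = k + 1 := ⟨j - 1, by omega⟩
      simp only [Nat.add_sub_cancel]
      rw [Nat.choose_succ_succ (m + 1) k, Nat.choose_succ_succ m k]
      simp only [Nat.succ_eq_add_one]
      omega
    rw [← hcard]
    refine main_aux a (2 * n) (n + j - 1) (F1 ∪ F2 ∪ F3) ?_ ?_ ?_ ?_
    · rintro w hw
      simp only [Finset.mem_union, hF1, hF2, hF3, Finset.mem_image] at hw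
      rcases hw with (⟨ℓ, hℓ, rfl⟩ | ⟨ℓ, hℓ, rfl⟩) | ⟨ℓ, hℓ, rfl⟩
      · exact wd_props a (2 * n) (n + j - 1) n (j - 1) ℓ false hℓ
          (by simp <;> omega) (by simp <;> omega) (by simp <;> omega)
      · exact wd_props a (2 * n) (n + j - 1) (n - 1) j ℓ false hℓ
          (by simp <;> omega) (by simp <;> omega) (by simp <;> omega)
      · exact wd_props a (2 * n) (n + j - 1) (n - 1) (j - 1) ℓ true hℓ
          (by simp <;> omega) (by simp <;> omega) (by simp <;> omega)
    · refine ⟨wd true (List.replicate (j - 1) true ++ List.replicate (n - (j - 1)) false) false, ?_⟩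
      simp only [Finset.mem_union, hF1, Finset.mem_image]
      exact Or.inl (Or.inl ⟨_, (mem_longs n (j - 1) _).mpr ⟨by simp <;> omega, by simp [List.count_replicate]⟩, rfl⟩)
    · intro w hw2 hw4
      have := pot w true 0 (by omega)
      simp [psi] at this
      omega
    · intro w hw2 hw4 hlen
      obtain ⟨ℓ, d, rfl⟩ := CL w.length w le_rfl true a (2 * n)
        (by simpa [px] using hw2) (by simpa [px] using hw4) (by omega)
      have e2 := wd_c2 ℓ true d
      have e4 := wd_c4 ℓ true d
      have el := wd_len ℓ true d
      simp [px] at e2 e4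
      rw [e2] at hw2
      rw [e4] at hw4
      rw [el] at hlen
      simp only [Finset.mem_union, hF1, hF2, hF3, Finset.mem_image]
      cases d
      · simp only [Bool.toNat_false] at hw2 hw4 hlen
        rcases show (ℓ.length = n ∧ ℓ.count true = j - 1) ∨
            (ℓ.length = n - 1 ∧ ℓ.count true = j) from by omega with h | h
        · exact Or.inl (Or.inl ⟨ℓ, (mem_longs _ _ ℓ).mpr h, rfl⟩)
        · exact Or.inl (Or.inr ⟨ℓ, (mem_longs _ _ ℓ).mpr h, rfl⟩)
      · simp only [Bool.toNat_true] at hw2 hw4 hlen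
        exact Or.inr ⟨ℓ, (mem_longs _ _ ℓ).mpr ⟨by omega, by omega⟩, rfl⟩
end
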